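/- arXiv:1402.1717 — 3 statements merged into one kernel-verified Lean document; each statement's English description precedes it below -/
import Mathlib

section
/- For every s ∈ ℂ, on (𝔳 × 𝔷) ∖ {(0,0)} one has Δ² K_s = B(s) ( 2p K_{s−1} + (B(s−1) + 16(s−1)) |X|⁴ K_{s−2} ). -/
open scoped InnerProductSpace

noncomputable section

/-- The left-invariant vector field on `N = 𝔳 × 𝔷` associated to `S ∈ 𝔳`:
`(Sf)(X,Z) = ∂_𝔳 f(X,Z)[S] - ½ ∂_𝔷 f(X,Z)[[S,X]]`. -/
def vfV {V W : Type*} [NormedAddCommGroup V] [InnerProductSpace ℝ V]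
    [NormedAddCommGroup W] [InnerProductSpace ℝ W]
    (br : V →ₗ[ℝ] V →ₗ[ℝ] W) (S : V) (f : V × W → ℂ) : V × W → ℂ :=
  fun x => fderiv ℝ f x (S, 0) - (1/2 : ℂ) * fderiv ℝ f x (0, br S x.1)

/-- The left-invariant vector field associated to `T ∈ 𝔷`: `(Tf)(X,Z) = ∂_𝔷 f(X,Z)[T]`. -/
def vfW {V W : Type*} [NormedAddCommGroup V] [InnerProductSpace ℝ V]
    [NormedAddCommGroup W] [InnerProductSpace ℝ W]
    (T : W) (f : V × W → ℂ) : V × W → ℂ :=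
  fun x => fderiv ℝ f x (0, T)

/-- Sub-Laplacian `∑_{j ∈ fs} S_j²` associated to a family of vectors in `𝔳`. -/
def subLap {V W : Type*} [NormedAddCommGroup V] [InnerProductSpace ℝ V]
    [NormedAddCommGroup W] [InnerProductSpace ℝ W] {ι : Type*}
    (br : V →ₗ[ℝ] V →ₗ[ℝ] W) (fs : Finset ι) (S : ι → V) (f : V × W → ℂ) : V × W → ℂ :=
  fun x => ∑ j ∈ fs, vfV br (S j) (vfV br (S j) f) x

/-- Central Laplacian `∑_{j ∈ fs} T_j²` associated to a family of vectors in `𝔷`. -/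
def boxLap {V W : Type*} [NormedAddCommGroup V] [InnerProductSpace ℝ V]
    [NormedAddCommGroup W] [InnerProductSpace ℝ W] {ι : Type*}
    (fs : Finset ι) (T : ι → W) (f : V × W → ℂ) : V × W → ℂ :=
  fun x => ∑ j ∈ fs, vfW (T j) (vfW (T j) f) x

/-- The norm function `K(X,Z) = |X|⁴ + |Z|²`. -/
def Kfun {V W : Type*} [NormedAddCommGroup V] [NormedAddCommGroup W] (x : V × W) : ℝ :=
  ‖x.1‖^4 + ‖x.2‖^2

/-- The complex power `K_s = K^s`. -/
def Ks {V W : Type*} [NormedAddCommGroup V] [NormedAddCommGroup W] (s : ℂ) (x : V × W) : ℂ :=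
  (Kfun x : ℂ) ^ s

/-- `ρ = (p+2q)/2` as a complex number. -/
def rhoC (p q : ℕ) : ℂ := ((p : ℂ) + 2*q)/2

/-- `B(s) = 4s(4s+2ρ-2)`. -/
def Bc (p q : ℕ) (s : ℂ) : ℂ := 4*s*(4*s + 2*(rhoC p q) - 2)

/-- The component `X₂` of `X ∈ 𝔳` in `𝔳₂ = 𝔳₁ᗮ`. -/
def projPerp {V : Type*} [NormedAddCommGroup V] [InnerProductSpace ℝ V]
    [FiniteDimensional ℝ V] (V₁ : Submodule ℝ V) (X : V) : V :=
  (V₁ᗮ.orthogonalProjectionOnto X : V)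

section AuxHType

set_option linter.unusedSectionVars false
set_option maxHeartbeats 1000000

variable {V W : Type*} [NormedAddCommGroup V] [InnerProductSpace ℝ V]
    [NormedAddCommGroup W] [InnerProductSpace ℝ W]
    [FiniteDimensional ℝ V] [FiniteDimensional ℝ W]

lemma Kpos {y : V × W} (hy : y ≠ 0) : 0 < Kfun y := by
  have h : y.1 ≠ 0 ∨ y.2 ≠ 0 := by
    by_contra h; push_neg at h; exact hy (Prod.ext h.1 h.2)
  rcases h with h | h
  · have h1 : 0 < ‖y.1‖^4 := by have := norm_pos_iff.2 h; positivity
    have h2 : 0 ≤ ‖y.2‖^2 := by positivity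
    unfold Kfun; linarith
  · have h1 : 0 < ‖y.2‖^2 := by have := norm_pos_iff.2 h; positivity
    have h2 : 0 ≤ ‖y.1‖^4 := by positivity
    unfold Kfun; linarith

lemma br_anti {br : V →ₗ[ℝ] V →ₗ[ℝ] W} (hbr : ∀ X : V, br X X = 0) (a b : V) :
    br a b = - br b a := by
  have h := hbr (a + b)
  simp [map_add, hbr] at h
  rw [eq_neg_iff_add_eq_zero, add_comm]
  exact h

lemma Kfun_eq' (y : V × W) : Kfun y = ⟪y.1, y.1⟫_ℝ * ⟪y.1, y.1⟫_ℝ + ⟪y.2, y.2⟫_ℝ := by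
  unfold Kfun; rw [real_inner_self_eq_norm_sq, real_inner_self_eq_norm_sq]; ring

lemma D_u (y : V × W) :
    ∃ D : (V × W) →L[ℝ] ℝ, HasFDerivAt (fun y : V × W => ⟪y.1, y.1⟫_ℝ) D y ∧
      ∀ v : V × W, D v = 2 * ⟪y.1, v.1⟫_ℝ := by
  refine ⟨_, (hasFDerivAt_fst (𝕜 := ℝ)).inner ℝ (hasFDerivAt_fst (𝕜 := ℝ)), fun v => ?_⟩
  simp [fderivInnerCLM_apply, real_inner_comm]
  ring

lemma D_zz (y : V × W) :
    ∃ D : (V × W) →L[ℝ] ℝ, HasFDerivAt (fun y : V × W => ⟪y.2, y.2⟫_ℝ) D y ∧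
      ∀ v : V × W, D v = 2 * ⟪y.2, v.2⟫_ℝ := by
  refine ⟨_, (hasFDerivAt_snd (𝕜 := ℝ)).inner ℝ (hasFDerivAt_snd (𝕜 := ℝ)), fun v => ?_⟩
  simp [fderivInnerCLM_apply, real_inner_comm]
  ring

lemma D_innerS (Sv : V) (y : V × W) :
    ∃ D : (V × W) →L[ℝ] ℝ, HasFDerivAt (fun y : V × W => ⟪y.1, Sv⟫_ℝ) D y ∧
      ∀ v : V × W, D v = ⟪v.1, Sv⟫_ℝ := by
  refine ⟨_, (hasFDerivAt_fst (𝕜 := ℝ)).inner ℝ (hasFDerivAt_const Sv y), fun v => ?_⟩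
  simp [fderivInnerCLM_apply]

lemma D_brS (br : V →ₗ[ℝ] V →ₗ[ℝ] W) (Sv : V) (y : V × W) :
    ∃ D : (V × W) →L[ℝ] ℝ, HasFDerivAt (fun y : V × W => ⟪y.2, br y.1 Sv⟫_ℝ) D y ∧
      ∀ v : V × W, D v = ⟪v.2, br y.1 Sv⟫_ℝ + ⟪y.2, br v.1 Sv⟫_ℝ := by
  classical
  set L : V →L[ℝ] W := LinearMap.toContinuousLinearMap (br.flip Sv) with hL
  have hLapp : ∀ a : V, L a = br a Sv := fun a => rfl
  have h2 : HasFDerivAt (fun y : V × W => L y.1) (L.comp (ContinuousLinearMap.fst ℝ V W)) y :=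
    (L.comp (ContinuousLinearMap.fst ℝ V W)).hasFDerivAt
  refine ⟨_, (hasFDerivAt_snd (𝕜 := ℝ)).inner ℝ (by simpa [hLapp] using h2), fun v => ?_⟩
  simp [fderivInnerCLM_apply, hLapp]
  ring

lemma D_K (y : V × W) :
    ∃ D : (V × W) →L[ℝ] ℝ, HasFDerivAt (fun y : V × W => Kfun y) D y ∧
      ∀ v : V × W, D v = 4 * ⟪y.1, y.1⟫_ℝ * ⟪y.1, v.1⟫_ℝ + 2 * ⟪y.2, v.2⟫_ℝ := by
  obtain ⟨D1, h1, e1⟩ := D_u (V := V) (W := W) y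
  obtain ⟨D2, h2, e2⟩ := D_zz (V := V) (W := W) y
  refine ⟨_, HasFDerivAt.congr_of_eventuallyEq ((h1.mul h1).add h2)
    (Filter.Eventually.of_forall fun z => (Kfun_eq' z)), fun v => ?_⟩
  simp [e1, e2, smul_eq_mul]
  ring

lemma D_C {f : V × W → ℝ} {D : (V × W) →L[ℝ] ℝ} {y : V × W} (h : HasFDerivAt f D y) :
    HasFDerivAt (fun y => (f y : ℂ)) (Complex.ofRealCLM.comp D) y :=
  Complex.ofRealCLM.hasFDerivAt.comp y h

lemma D_Ks (t : ℂ) {y : V × W} (hy : y ≠ 0) :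
    ∃ D : (V × W) →L[ℝ] ℂ, HasFDerivAt (fun y : V × W => (Kfun y : ℂ)^t) D y ∧
      ∀ v : V × W, D v = t * (Kfun y : ℂ)^(t-1) *
        ((4 * ⟪y.1, y.1⟫_ℝ * ⟪y.1, v.1⟫_ℝ + 2 * ⟪y.2, v.2⟫_ℝ : ℝ) : ℂ) := by
  obtain ⟨D, hD, eD⟩ := D_K y
  have hmem : ((Kfun y : ℝ) : ℂ) ∈ Complex.slitPlane :=
    Complex.ofReal_mem_slitPlane.2 (Kpos hy)
  have hc : HasDerivAt (fun z : ℂ => z ^ t) (t * (Kfun y : ℂ)^(t-1)) ((Kfun y : ℝ) : ℂ) :=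
    (Complex.hasStrictDerivAt_cpow_const hmem).hasDerivAt
  have := hc.comp_hasFDerivAt y (D_C hD)
  refine ⟨_, this, fun v => ?_⟩
  simp [eD]

/-- `g(S)(X,Z) = 4|X|²⟨X,S⟩ + ⟨Z,[X,S]⟩`. -/
def gfun (br : V →ₗ[ℝ] V →ₗ[ℝ] W) (Sv : V) (y : V × W) : ℝ :=
  4 * ⟪y.1, y.1⟫_ℝ * ⟪y.1, Sv⟫_ℝ + ⟪y.2, br y.1 Sv⟫_ℝ

/-- Model function `c |X|^{2m} K^t`. -/
def fm {V W : Type*} [NormedAddCommGroup V] [InnerProductSpace ℝ V]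
    [NormedAddCommGroup W] [InnerProductSpace ℝ W]
    (c : ℂ) (m : ℕ) (t : ℂ) (y : V × W) : ℂ :=
  c * ((⟪y.1, y.1⟫_ℝ : ℂ)^m * (Kfun y : ℂ)^t)

lemma D_fm (c : ℂ) (m : ℕ) (t : ℂ) {y : V × W} (hy : y ≠ 0) :
    ∃ D : (V × W) →L[ℝ] ℂ, HasFDerivAt (fm c m t) D y ∧
      ∀ v : V × W, D v = c * ((m : ℂ) * (⟪y.1, y.1⟫_ℝ : ℂ)^(m-1) * ((2 * ⟪y.1, v.1⟫_ℝ : ℝ) : ℂ)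
          * (Kfun y : ℂ)^t
        + (⟪y.1, y.1⟫_ℝ : ℂ)^m * (t * (Kfun y : ℂ)^(t-1) *
            ((4 * ⟪y.1, y.1⟫_ℝ * ⟪y.1, v.1⟫_ℝ + 2 * ⟪y.2, v.2⟫_ℝ : ℝ) : ℂ))) := by
  obtain ⟨Du, hu, eu⟩ := D_u y
  obtain ⟨DK, hK, eK⟩ := D_Ks t hy
  have hpow : HasFDerivAt (fun y : V × W => ((⟪y.1, y.1⟫_ℝ : ℝ) : ℂ)^m)
      (((m : ℂ) * ((⟪y.1, y.1⟫_ℝ : ℝ) : ℂ)^(m-1)) • (Complex.ofRealCLM.comp Du)) y :=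
    (hasDerivAt_pow m _).comp_hasFDerivAt y (D_C hu)
  refine ⟨_, (hpow.mul hK).const_mul c, fun v => ?_⟩
  simp [eu, eK, smul_eq_mul]
  ring

/-- First application of the vector field to `fm`. -/
def fm2 (br : V →ₗ[ℝ] V →ₗ[ℝ] W) (c : ℂ) (m : ℕ) (t : ℂ) (Sv : V) (y : V × W) : ℂ :=
  c * (2*(m : ℂ)*(⟪y.1, y.1⟫_ℝ : ℂ)^(m-1)*(⟪y.1, Sv⟫_ℝ : ℂ)*(Kfun y : ℂ)^t
    + t*(⟪y.1, y.1⟫_ℝ : ℂ)^m*(Kfun y : ℂ)^(t-1)*((gfun br Sv y : ℝ) : ℂ))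

lemma M1 {br : V →ₗ[ℝ] V →ₗ[ℝ] W} (hbr : ∀ X : V, br X X = 0)
    (c : ℂ) (m : ℕ) (t : ℂ) (Sv : V) {y : V × W} (hy : y ≠ 0) :
    vfV br Sv (fm c m t) y = fm2 br c m t Sv y := by
  obtain ⟨D, hD, eD⟩ := D_fm c m t hy
  unfold vfV
  rw [hD.fderiv, eD, eD]
  have hba : br Sv y.1 = - br y.1 Sv := br_anti hbr Sv y.1
  unfold fm2 gfun
  simp [hba]
  ring

lemma D_g (br : V →ₗ[ℝ] V →ₗ[ℝ] W) (Sv : V) (y : V × W) :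
    ∃ D : (V × W) →L[ℝ] ℝ, HasFDerivAt (gfun br Sv) D y ∧
      ∀ v : V × W, D v = 8 * ⟪y.1, v.1⟫_ℝ * ⟪y.1, Sv⟫_ℝ + 4 * ⟪y.1, y.1⟫_ℝ * ⟪v.1, Sv⟫_ℝ
        + ⟪v.2, br y.1 Sv⟫_ℝ + ⟪y.2, br v.1 Sv⟫_ℝ := by
  obtain ⟨Du, hu, eu⟩ := D_u y
  obtain ⟨Ds, hs, es⟩ := D_innerS Sv y
  obtain ⟨Db, hb, eb⟩ := D_brS br Sv y
  refine ⟨_, (((hu.const_mul (4:ℝ)).mul hs).add hb : HasFDerivAt (gfun br Sv) _ y),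
    fun v => ?_⟩
  simp [eu, es, eb, smul_eq_mul]
  ring

lemma D_fm2 (br : V →ₗ[ℝ] V →ₗ[ℝ] W) (c : ℂ) (m : ℕ) (t : ℂ) (Sv : V) {y : V × W}
    (hy : y ≠ 0) :
    ∃ D : (V × W) →L[ℝ] ℂ, HasFDerivAt (fm2 br c m t Sv) D y ∧
      ∀ v : V × W, D v = c * (
          2*(m : ℂ) * (((m-1 : ℕ) : ℂ) * (⟪y.1, y.1⟫_ℝ : ℂ)^(m-1-1) * ((2 * ⟪y.1, v.1⟫_ℝ : ℝ) : ℂ))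
            * (⟪y.1, Sv⟫_ℝ : ℂ) * (Kfun y : ℂ)^t
        + 2*(m : ℂ) * (⟪y.1, y.1⟫_ℝ : ℂ)^(m-1) * ((⟪v.1, Sv⟫_ℝ : ℝ) : ℂ) * (Kfun y : ℂ)^t
        + 2*(m : ℂ) * (⟪y.1, y.1⟫_ℝ : ℂ)^(m-1) * (⟪y.1, Sv⟫_ℝ : ℂ)
            * (t * (Kfun y : ℂ)^(t-1) * ((4 * ⟪y.1, y.1⟫_ℝ * ⟪y.1, v.1⟫_ℝ + 2 * ⟪y.2, v.2⟫_ℝ : ℝ) : ℂ))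
        + t * ((m : ℂ) * (⟪y.1, y.1⟫_ℝ : ℂ)^(m-1) * ((2 * ⟪y.1, v.1⟫_ℝ : ℝ) : ℂ))
            * (Kfun y : ℂ)^(t-1) * ((gfun br Sv y : ℝ) : ℂ)
        + t * (⟪y.1, y.1⟫_ℝ : ℂ)^m
            * ((t-1) * (Kfun y : ℂ)^(t-1-1) * ((4 * ⟪y.1, y.1⟫_ℝ * ⟪y.1, v.1⟫_ℝ + 2 * ⟪y.2, v.2⟫_ℝ : ℝ) : ℂ))
            * ((gfun br Sv y : ℝ) : ℂ)
        + t * (⟪y.1, y.1⟫_ℝ : ℂ)^m * (Kfun y : ℂ)^(t-1)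
            * ((8 * ⟪y.1, v.1⟫_ℝ * ⟪y.1, Sv⟫_ℝ + 4 * ⟪y.1, y.1⟫_ℝ * ⟪v.1, Sv⟫_ℝ
                + ⟪v.2, br y.1 Sv⟫_ℝ + ⟪y.2, br v.1 Sv⟫_ℝ : ℝ) : ℂ)) := by
  obtain ⟨Du, hu, eu⟩ := D_u y
  obtain ⟨Ds, hs, es⟩ := D_innerS Sv y
  obtain ⟨DKt, hKt, eKt⟩ := D_Ks t hy
  obtain ⟨DKt1, hKt1, eKt1⟩ := D_Ks (t-1) hy
  obtain ⟨Dg, hg, eg⟩ := D_g br Sv y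
  have hP1 : HasFDerivAt (fun y : V × W => (⟪y.1, y.1⟫_ℝ : ℂ)^(m-1))
      ((((m-1 : ℕ) : ℂ) * (⟪y.1, y.1⟫_ℝ : ℂ)^(m-1-1)) • (Complex.ofRealCLM.comp Du)) y :=
    (hasDerivAt_pow (m-1) _).comp_hasFDerivAt y (D_C hu)
  have hPm : HasFDerivAt (fun y : V × W => (⟪y.1, y.1⟫_ℝ : ℂ)^m)
      ((((m : ℕ) : ℂ) * (⟪y.1, y.1⟫_ℝ : ℂ)^(m-1)) • (Complex.ofRealCLM.comp Du)) y :=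
    (hasDerivAt_pow m _).comp_hasFDerivAt y (D_C hu)
  have hA : HasFDerivAt (fun y : V × W =>
      2*(m : ℂ)*(⟪y.1, y.1⟫_ℝ : ℂ)^(m-1)*(⟪y.1, Sv⟫_ℝ : ℂ)*(Kfun y : ℂ)^t) _ y :=
    (((hP1.const_mul (2*(m : ℂ))).mul (D_C hs)).mul hKt)
  have hB : HasFDerivAt (fun y : V × W =>
      t*(⟪y.1, y.1⟫_ℝ : ℂ)^m*(Kfun y : ℂ)^(t-1)*((gfun br Sv y : ℝ) : ℂ)) _ y :=
    (((hPm.const_mul t).mul hKt1).mul (D_C hg))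
  refine ⟨_, (hA.add hB).const_mul c, fun v => ?_⟩
  simp [eu, es, eKt, eKt1, eg, smul_eq_mul]
  ring

lemma M2j {br : V →ₗ[ℝ] V →ₗ[ℝ] W} (hbr : ∀ X : V, br X X = 0)
    (c : ℂ) (m : ℕ) (t : ℂ) (Sv : V) {y : V × W} (hy : y ≠ 0) :
    vfV br Sv (vfV br Sv (fm c m t)) y = c * (
        4*(m : ℂ)*((m-1 : ℕ) : ℂ)*(⟪y.1, y.1⟫_ℝ : ℂ)^(m-1-1)*(⟪y.1, Sv⟫_ℝ : ℂ)^2*(Kfun y : ℂ)^t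
      + 2*(m : ℂ)*(⟪y.1, y.1⟫_ℝ : ℂ)^(m-1)*(⟪Sv, Sv⟫_ℝ : ℂ)*(Kfun y : ℂ)^t
      + 4*(m : ℂ)*t*(⟪y.1, y.1⟫_ℝ : ℂ)^(m-1)*(⟪y.1, Sv⟫_ℝ : ℂ)*(Kfun y : ℂ)^(t-1)*((gfun br Sv y : ℝ) : ℂ)
      + t*(t-1)*(⟪y.1, y.1⟫_ℝ : ℂ)^m*(Kfun y : ℂ)^(t-1-1)*((gfun br Sv y : ℝ) : ℂ)^2
      + t*(⟪y.1, y.1⟫_ℝ : ℂ)^m*(Kfun y : ℂ)^(t-1)*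
          (8*(⟪y.1, Sv⟫_ℝ : ℂ)^2 + 4*(⟪y.1, y.1⟫_ℝ : ℂ)*(⟪Sv, Sv⟫_ℝ : ℂ)
            + (1/2 : ℂ)*(⟪br y.1 Sv, br y.1 Sv⟫_ℝ : ℂ))) := by
  have hcong : vfV br Sv (fm c m t) =ᶠ[nhds y] fm2 br c m t Sv := by
    have hU : IsOpen {z : V × W | z ≠ 0} := isOpen_ne
    exact Filter.eventuallyEq_of_mem (hU.mem_nhds hy) (fun z hz => M1 hbr c m t Sv hz)
  obtain ⟨D, hD, eD⟩ := D_fm2 br c m t Sv hy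
  have hfd : fderiv ℝ (vfV br Sv (fm c m t)) y = D := by rw [hcong.fderiv_eq, hD.fderiv]
  show fderiv ℝ (vfV br Sv (fm c m t)) y (Sv, 0)
      - (1/2 : ℂ) * fderiv ℝ (vfV br Sv (fm c m t)) y (0, br Sv y.1) = _
  rw [hfd, eD, eD]
  have hba : br Sv y.1 = - br y.1 Sv := br_anti hbr Sv y.1
  have hss : br Sv Sv = 0 := hbr Sv
  unfold gfun
  simp [hba, hss]
  ring

lemma sumA {p : ℕ} (S : OrthonormalBasis (Fin p) ℝ V) (X : V) :
    ∑ j, ⟪X, S j⟫_ℝ^2 = ⟪X, X⟫_ℝ := by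
  have := S.sum_inner_mul_inner X X
  calc ∑ j, ⟪X, S j⟫_ℝ^2 = ∑ j, ⟪X, S j⟫_ℝ * ⟪S j, X⟫_ℝ := by
        refine Finset.sum_congr rfl fun j _ => ?_
        rw [real_inner_comm (S j) X]; ring
    _ = ⟪X, X⟫_ℝ := this

lemma sumB {p : ℕ} (S : OrthonormalBasis (Fin p) ℝ V) :
    ∑ j : Fin p, ⟪S j, S j⟫_ℝ = (p : ℝ) := by
  have h : ∀ j : Fin p, ⟪S j, S j⟫_ℝ = 1 := fun j => by
    rw [real_inner_self_eq_norm_sq, S.orthonormal.1 j]; norm_num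
  simp [h]

lemma g_vec {br : V →ₗ[ℝ] V →ₗ[ℝ] W} {J : W →ₗ[ℝ] V →ₗ[ℝ] V}
    (hJ : ∀ (z : W) (X Y : V), ⟪J z X, Y⟫_ℝ = ⟪z, br X Y⟫_ℝ) (Sv : V) (y : V × W) :
    gfun br Sv y = ⟪(4 * ⟪y.1, y.1⟫_ℝ) • y.1 + J y.2 y.1, Sv⟫_ℝ := by
  rw [inner_add_left, real_inner_smul_left, hJ]
  unfold gfun; ring

lemma JX_inner_X {br : V →ₗ[ℝ] V →ₗ[ℝ] W} {J : W →ₗ[ℝ] V →ₗ[ℝ] V}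
    (hbr : ∀ X : V, br X X = 0)
    (hJ : ∀ (z : W) (X Y : V), ⟪J z X, Y⟫_ℝ = ⟪z, br X Y⟫_ℝ) (z : W) (X : V) :
    ⟪J z X, X⟫_ℝ = 0 := by rw [hJ, hbr, inner_zero_right]

lemma JX_sq {br : V →ₗ[ℝ] V →ₗ[ℝ] W} {J : W →ₗ[ℝ] V →ₗ[ℝ] V}
    (hbr : ∀ X : V, br X X = 0)
    (hJ : ∀ (z : W) (X Y : V), ⟪J z X, Y⟫_ℝ = ⟪z, br X Y⟫_ℝ)
    (hH : ∀ (z : W) (X : V), J z (J z X) = (-16 * ‖z‖^2) • X) (z : W) (X : V) :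
    ⟪J z X, J z X⟫_ℝ = 16 * ⟪z, z⟫_ℝ * ⟪X, X⟫_ℝ := by
  have h1 : ⟪J z (J z X), X⟫_ℝ = -16 * ⟪z, z⟫_ℝ * ⟪X, X⟫_ℝ := by
    rw [hH, real_inner_smul_left, real_inner_self_eq_norm_sq z,
      real_inner_self_eq_norm_sq X]
  have h2 : ⟪J z (J z X), X⟫_ℝ = - ⟪J z X, J z X⟫_ℝ := by
    rw [hJ, br_anti hbr, inner_neg_right, hJ]
  rw [h2] at h1; linarith

lemma sumC {p : ℕ} (S : OrthonormalBasis (Fin p) ℝ V)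
    {br : V →ₗ[ℝ] V →ₗ[ℝ] W} {J : W →ₗ[ℝ] V →ₗ[ℝ] V}
    (hbr : ∀ X : V, br X X = 0)
    (hJ : ∀ (z : W) (X Y : V), ⟪J z X, Y⟫_ℝ = ⟪z, br X Y⟫_ℝ) (y : V × W) :
    ∑ j, ⟪y.1, S j⟫_ℝ * gfun br (S j) y = 4 * ⟪y.1, y.1⟫_ℝ^2 := by
  have h : ∀ j, ⟪y.1, S j⟫_ℝ * gfun br (S j) y
      = ⟪y.1, S j⟫_ℝ * ⟪S j, (4 * ⟪y.1, y.1⟫_ℝ) • y.1 + J y.2 y.1⟫_ℝ := fun j => by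
    rw [g_vec hJ, real_inner_comm ((4 * ⟪y.1, y.1⟫_ℝ) • y.1 + J y.2 y.1) (S j)]
  rw [Finset.sum_congr rfl fun j _ => h j, S.sum_inner_mul_inner]
  have hcomm : ⟪y.1, J y.2 y.1⟫_ℝ = 0 := by
    rw [real_inner_comm, JX_inner_X hbr hJ]
  rw [inner_add_right, real_inner_smul_right, hcomm]
  ring

lemma sumD {p : ℕ} (S : OrthonormalBasis (Fin p) ℝ V)
    {br : V →ₗ[ℝ] V →ₗ[ℝ] W} {J : W →ₗ[ℝ] V →ₗ[ℝ] V}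
    (hbr : ∀ X : V, br X X = 0)
    (hJ : ∀ (z : W) (X Y : V), ⟪J z X, Y⟫_ℝ = ⟪z, br X Y⟫_ℝ)
    (hH : ∀ (z : W) (X : V), J z (J z X) = (-16 * ‖z‖^2) • X) (y : V × W) :
    ∑ j, (gfun br (S j) y)^2 = 16 * ⟪y.1, y.1⟫_ℝ * Kfun y := by
  have h : ∀ j, (gfun br (S j) y)^2
      = ⟪(4 * ⟪y.1, y.1⟫_ℝ) • y.1 + J y.2 y.1, S j⟫_ℝ
        * ⟪S j, (4 * ⟪y.1, y.1⟫_ℝ) • y.1 + J y.2 y.1⟫_ℝ := fun j => by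
    rw [g_vec hJ, real_inner_comm ((4 * ⟪y.1, y.1⟫_ℝ) • y.1 + J y.2 y.1) (S j)]; ring
  rw [Finset.sum_congr rfl fun j _ => h j, S.sum_inner_mul_inner]
  have hcomm : ⟪y.1, J y.2 y.1⟫_ℝ = 0 := by
    rw [real_inner_comm, JX_inner_X hbr hJ]
  rw [inner_add_add_self, JX_sq hbr hJ hH]
  simp only [real_inner_smul_left, real_inner_smul_right]
  simp [inner_add_add_self, real_inner_smul_left, real_inner_smul_right,
    JX_inner_X hbr hJ, JX_sq hbr hJ hH, hcomm, Kfun_eq']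
  ring

lemma sumE {p q : ℕ} (S : OrthonormalBasis (Fin p) ℝ V) (T : OrthonormalBasis (Fin q) ℝ W)
    {br : V →ₗ[ℝ] V →ₗ[ℝ] W} {J : W →ₗ[ℝ] V →ₗ[ℝ] V}
    (hbr : ∀ X : V, br X X = 0)
    (hJ : ∀ (z : W) (X Y : V), ⟪J z X, Y⟫_ℝ = ⟪z, br X Y⟫_ℝ)
    (hH : ∀ (z : W) (X : V), J z (J z X) = (-16 * ‖z‖^2) • X) (y : V × W) :
    ∑ j, ⟪br y.1 (S j), br y.1 (S j)⟫_ℝ = 16 * q * ⟪y.1, y.1⟫_ℝ := by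
  have h : ∀ j, ⟪br y.1 (S j), br y.1 (S j)⟫_ℝ = ∑ i, ⟪J (T i) y.1, S j⟫_ℝ^2 := fun j => by
    have h1 := T.sum_inner_mul_inner (br y.1 (S j)) (br y.1 (S j))
    rw [← h1]
    refine Finset.sum_congr rfl fun i _ => ?_
    rw [hJ, real_inner_comm (br y.1 (S j)) (T i)]
    ring
  rw [Finset.sum_congr rfl fun j _ => h j, Finset.sum_comm]
  have h2 : ∀ i, ∑ j, ⟪J (T i) y.1, S j⟫_ℝ^2 = 16 * ⟪y.1, y.1⟫_ℝ := fun i => by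
    rw [sumA S (J (T i) y.1), JX_sq hbr hJ hH]
    have hT : ⟪T i, T i⟫_ℝ = 1 := by
      rw [real_inner_self_eq_norm_sq, T.orthonormal.1 i]; norm_num
    rw [hT]; ring
  rw [Finset.sum_congr rfl fun i _ => h2 i, Finset.sum_const, Finset.card_univ,
    Fintype.card_fin, nsmul_eq_mul]
  ring

lemma M2 {p q : ℕ} (S : OrthonormalBasis (Fin p) ℝ V) (T : OrthonormalBasis (Fin q) ℝ W)
    {br : V →ₗ[ℝ] V →ₗ[ℝ] W} {J : W →ₗ[ℝ] V →ₗ[ℝ] V}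
    (hbr : ∀ X : V, br X X = 0)
    (hJ : ∀ (z : W) (X Y : V), ⟪J z X, Y⟫_ℝ = ⟪z, br X Y⟫_ℝ)
    (hH : ∀ (z : W) (X : V), J z (J z X) = (-16 * ‖z‖^2) • X)
    (c : ℂ) (m : ℕ) (t : ℂ) {y : V × W} (hy : y ≠ 0) :
    subLap br Finset.univ (fun j => S j) (fm c m t) y
      = c * ( 4*(m : ℂ)*((m-1 : ℕ) : ℂ)*(⟪y.1, y.1⟫_ℝ : ℂ)^(m-1-1)*(⟪y.1, y.1⟫_ℝ : ℂ)*(Kfun y : ℂ)^t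
        + 2*(m : ℂ)*(p : ℂ)*(⟪y.1, y.1⟫_ℝ : ℂ)^(m-1)*(Kfun y : ℂ)^t
        + 16*(m : ℂ)*t*(⟪y.1, y.1⟫_ℝ : ℂ)^(m-1)*(⟪y.1, y.1⟫_ℝ : ℂ)^2*(Kfun y : ℂ)^(t-1)
        + (16*t*(t-1) + 4*t*(2+(p : ℂ)+2*(q : ℂ)))*(⟪y.1, y.1⟫_ℝ : ℂ)^m*(⟪y.1, y.1⟫_ℝ : ℂ)*(Kfun y : ℂ)^(t-1) ) := by
  have hk0 : (Kfun y : ℂ) ≠ 0 := by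
    exact_mod_cast (Kpos hy).ne'
  have hKK : (Kfun y : ℂ)^(t-1-1) * (Kfun y : ℂ) = (Kfun y : ℂ)^(t-1) := by
    have h1 : (Kfun y : ℂ)^(t-1) = (Kfun y : ℂ)^((t-1-1) + 1) := by ring_nf
    rw [h1, Complex.cpow_add _ _ hk0, Complex.cpow_one]
  unfold subLap
  rw [Finset.sum_congr rfl (fun j _ => M2j hbr c m t (S j) hy)]
  have key : ∀ j : Fin p, c * (
        4*(m : ℂ)*((m-1 : ℕ) : ℂ)*(⟪y.1, y.1⟫_ℝ : ℂ)^(m-1-1)*(⟪y.1, S j⟫_ℝ : ℂ)^2*(Kfun y : ℂ)^t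
      + 2*(m : ℂ)*(⟪y.1, y.1⟫_ℝ : ℂ)^(m-1)*(⟪S j, S j⟫_ℝ : ℂ)*(Kfun y : ℂ)^t
      + 4*(m : ℂ)*t*(⟪y.1, y.1⟫_ℝ : ℂ)^(m-1)*(⟪y.1, S j⟫_ℝ : ℂ)*(Kfun y : ℂ)^(t-1)*((gfun br (S j) y : ℝ) : ℂ)
      + t*(t-1)*(⟪y.1, y.1⟫_ℝ : ℂ)^m*(Kfun y : ℂ)^(t-1-1)*((gfun br (S j) y : ℝ) : ℂ)^2
      + t*(⟪y.1, y.1⟫_ℝ : ℂ)^m*(Kfun y : ℂ)^(t-1)*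
          (8*(⟪y.1, S j⟫_ℝ : ℂ)^2 + 4*(⟪y.1, y.1⟫_ℝ : ℂ)*(⟪S j, S j⟫_ℝ : ℂ)
            + (1/2 : ℂ)*(⟪br y.1 (S j), br y.1 (S j)⟫_ℝ : ℂ)))
      = (c*(4*(m : ℂ)*((m-1 : ℕ) : ℂ)*(⟪y.1, y.1⟫_ℝ : ℂ)^(m-1-1)*(Kfun y : ℂ)^t
            + 8*t*(⟪y.1, y.1⟫_ℝ : ℂ)^m*(Kfun y : ℂ)^(t-1))) * ((⟪y.1, S j⟫_ℝ^2 : ℝ) : ℂ)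
      + (c*(2*(m : ℂ)*(⟪y.1, y.1⟫_ℝ : ℂ)^(m-1)*(Kfun y : ℂ)^t
            + 4*t*(⟪y.1, y.1⟫_ℝ : ℂ)^m*(⟪y.1, y.1⟫_ℝ : ℂ)*(Kfun y : ℂ)^(t-1))) * ((⟪S j, S j⟫_ℝ : ℝ) : ℂ)
      + (c*(4*(m : ℂ)*t*(⟪y.1, y.1⟫_ℝ : ℂ)^(m-1)*(Kfun y : ℂ)^(t-1)))
          * ((⟪y.1, S j⟫_ℝ * gfun br (S j) y : ℝ) : ℂ)
      + (c*(t*(t-1)*(⟪y.1, y.1⟫_ℝ : ℂ)^m*(Kfun y : ℂ)^(t-1-1))) * (((gfun br (S j) y)^2 : ℝ) : ℂ)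
      + (c*(t*(⟪y.1, y.1⟫_ℝ : ℂ)^m*(Kfun y : ℂ)^(t-1)*(1/2 : ℂ)))
          * ((⟪br y.1 (S j), br y.1 (S j)⟫_ℝ : ℝ) : ℂ) := fun j => by
    push_cast
    ring
  rw [Finset.sum_congr rfl (fun j _ => key j)]
  rw [Finset.sum_add_distrib, Finset.sum_add_distrib, Finset.sum_add_distrib,
    Finset.sum_add_distrib, ← Finset.mul_sum, ← Finset.mul_sum, ← Finset.mul_sum,
    ← Finset.mul_sum, ← Finset.mul_sum]
  have hA : (∑ j, ((⟪y.1, S j⟫_ℝ^2 : ℝ) : ℂ)) = ((⟪y.1, y.1⟫_ℝ : ℝ) : ℂ) := by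
    exact_mod_cast congrArg (fun r : ℝ => (r : ℂ)) (sumA S y.1)
  have hB : (∑ j : Fin p, ((⟪S j, S j⟫_ℝ : ℝ) : ℂ)) = ((p : ℕ) : ℂ) := by
    exact_mod_cast congrArg (fun r : ℝ => (r : ℂ)) (sumB S)
  have hC : (∑ j, ((⟪y.1, S j⟫_ℝ * gfun br (S j) y : ℝ) : ℂ)) = ((4 * ⟪y.1, y.1⟫_ℝ^2 : ℝ) : ℂ) := by
    exact_mod_cast congrArg (fun r : ℝ => (r : ℂ)) (sumC S hbr hJ y)
  have hD : (∑ j, (((gfun br (S j) y)^2 : ℝ) : ℂ)) = ((16 * ⟪y.1, y.1⟫_ℝ * Kfun y : ℝ) : ℂ) := by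
    exact_mod_cast congrArg (fun r : ℝ => (r : ℂ)) (sumD S hbr hJ hH y)
  have hE : (∑ j, ((⟪br y.1 (S j), br y.1 (S j)⟫_ℝ : ℝ) : ℂ)) = ((16 * q * ⟪y.1, y.1⟫_ℝ : ℝ) : ℂ) := by
    exact_mod_cast congrArg (fun r : ℝ => (r : ℂ)) (sumE S T hbr hJ hH y)
  rw [hA, hB, hC, hD, hE]
  push_cast
  linear_combination (16 * c * t * (t-1) * (⟪y.1, y.1⟫_ℝ : ℂ)^m * (⟪y.1, y.1⟫_ℝ : ℂ)) * hKK

lemma vfV_congr_nhds (br : V →ₗ[ℝ] V →ₗ[ℝ] W) (Sv : V) {f g : V × W → ℂ} {x : V × W}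
    (h : f =ᶠ[nhds x] g) : vfV br Sv f x = vfV br Sv g x := by
  unfold vfV; rw [h.fderiv_eq]

lemma vfV2_congr (br : V →ₗ[ℝ] V →ₗ[ℝ] W) (Sv : V) {f g : V × W → ℂ} {x : V × W}
    (h : Set.EqOn f g {z : V × W | z ≠ 0}) (hx : x ≠ 0) :
    vfV br Sv (vfV br Sv f) x = vfV br Sv (vfV br Sv g) x := by
  have hU : IsOpen {z : V × W | z ≠ 0} := isOpen_ne
  have h1 : Set.EqOn (vfV br Sv f) (vfV br Sv g) {z : V × W | z ≠ 0} := fun z hz =>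
    vfV_congr_nhds br Sv (Filter.eventuallyEq_of_mem (hU.mem_nhds hz) h)
  exact vfV_congr_nhds br Sv (Filter.eventuallyEq_of_mem (hU.mem_nhds hx) h1)

end AuxHType

set_option maxHeartbeats 1000000 in
/-- `Δ² K_s = B(s) (2p K_{s-1} + (B(s-1) + 16(s-1)) |X|⁴ K_{s-2})`
on `(𝔳 × 𝔷) ∖ {(0,0)}`. -/
theorem deltaSqKs {V W : Type*} [NormedAddCommGroup V] [InnerProductSpace ℝ V]
    [NormedAddCommGroup W] [InnerProductSpace ℝ W]
    [FiniteDimensional ℝ V] [FiniteDimensional ℝ W]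
    (p q : ℕ) (hp : Module.finrank ℝ V = p) (hq : Module.finrank ℝ W = q)
    (br : V →ₗ[ℝ] V →ₗ[ℝ] W) (hbr : ∀ X : V, br X X = 0)
    (J : W →ₗ[ℝ] V →ₗ[ℝ] V)
    (hJ : ∀ (z : W) (X Y : V), ⟪J z X, Y⟫_ℝ = ⟪z, br X Y⟫_ℝ)
    (hH : ∀ (z : W) (X : V), J z (J z X) = (-16 * ‖z‖^2) • X)
    (S : OrthonormalBasis (Fin p) ℝ V)
    (T : OrthonormalBasis (Fin q) ℝ W)
    (s : ℂ) :
    ∀ x : V × W, x ≠ 0 →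
      subLap br Finset.univ (fun j => S j) (subLap br Finset.univ (fun j => S j) (Ks s)) x
        = Bc p q s * (2*(p : ℂ) * Ks (s-1) x
            + (Bc p q (s-1) + 16*(s-1)) * (‖x.1‖ : ℂ)^4 * Ks (s-2) x) := by
  intro x hx
  have hKs_fm : (Ks s : V × W → ℂ) = fm 1 0 s := funext fun y => by
    simp [Ks, fm]
  have hBt : ∀ t : ℂ, 16*t*(t-1) + 4*t*(2+(p : ℂ)+2*(q : ℂ)) = Bc p q t := fun t => by
    unfold Bc rhoC; ring
  have hinner : Set.EqOn (subLap br Finset.univ (fun j => S j) (Ks s))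
      (fm (Bc p q s) 1 (s-1)) {z : V × W | z ≠ 0} := fun z hz => by
    rw [hKs_fm, M2 S T hbr hJ hH 1 0 s hz]
    unfold fm
    rw [← hBt s]
    norm_num
    ring
  have hcong : subLap br Finset.univ (fun j => S j)
        (subLap br Finset.univ (fun j => S j) (Ks s)) x
      = subLap br Finset.univ (fun j => S j) (fm (Bc p q s) 1 (s-1)) x := by
    unfold subLap
    exact Finset.sum_congr rfl fun j _ => vfV2_congr br (S j) hinner hx
  rw [hcong, M2 S T hbr hJ hH (Bc p q s) 1 (s-1) hx]
  rw [show s - 1 - 1 = s - 2 by ring]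
  have hnorm : (⟪x.1, x.1⟫_ℝ : ℂ) = (‖x.1‖ : ℂ)^2 := by
    rw [real_inner_self_eq_norm_sq]; push_cast; ring
  rw [← hBt (s-1)]
  unfold Ks
  rw [hnorm]
  simp only [Nat.cast_one, Nat.sub_self, pow_zero, Nat.cast_zero, pow_one, mul_one,
    one_mul, mul_zero, zero_mul, add_zero, zero_add, Nat.cast_ofNat]
  ring
end
end

section
/- For every s ∈ ℂ, on (𝔳 × 𝔷) ∖ {(0,0)} one has ( Δ² + 4(4s+2ρ−2)² □ ) K_s = 2 B(s) (2s+q−1)(4s+2ρ−4) K_{s−1}. -/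
open scoped InnerProductSpace

noncomputable section

section MyAux
variable {V W : Type*} [NormedAddCommGroup V] [InnerProductSpace ℝ V]
  [NormedAddCommGroup W] [InnerProductSpace ℝ W] [FiniteDimensional ℝ V] [FiniteDimensional ℝ W]

set_option linter.unusedSectionVars false

/-! ### basic CLM derivatives -/

def dKr (x : V × W) : V × W →L[ℝ] ℝ :=
  ((4:ℝ)*‖x.1‖^2) • ((innerSL ℝ x.1).comp (ContinuousLinearMap.fst ℝ V W))
    + (2:ℝ) • ((innerSL ℝ x.2).comp (ContinuousLinearMap.snd ℝ V W))

@[simp] lemma dKr_apply (x : V × W) (v : V) (w : W) :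
    dKr x (v, w) = 4*‖x.1‖^2 * ⟪x.1, v⟫_ℝ + 2 * ⟪x.2, w⟫_ℝ := by
  simp [dKr, smul_eq_mul]

lemma Kfun_pos (x : V × W) (hx : x ≠ 0) : 0 < Kfun x := by
  have h : x.1 ≠ 0 ∨ x.2 ≠ 0 := by
    by_contra h; push_neg at h
    exact hx (Prod.ext h.1 h.2)
  rcases h with h | h
  · have h1 : (0:ℝ) < ‖x.1‖^4 := pow_pos (norm_pos_iff.2 h) 4
    have h2 : (0:ℝ) ≤ ‖x.2‖^2 := by positivity
    unfold Kfun; linarith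
  · have h1 : (0:ℝ) < ‖x.2‖^2 := pow_pos (norm_pos_iff.2 h) 2
    have h2 : (0:ℝ) ≤ ‖x.1‖^4 := by positivity
    unfold Kfun; linarith

lemma hasFDerivAt_Kfun (x : V × W) : HasFDerivAt (Kfun : V × W → ℝ) (dKr x) x := by
  have h1 : HasFDerivAt (fun y : V × W => ‖y.1‖^2)
      (2 • ((innerSL ℝ x.1).comp (ContinuousLinearMap.fst ℝ V W))) x :=
    (hasFDerivAt_fst (p := x) (𝕜 := ℝ)).norm_sq
  have h2 : HasFDerivAt (fun y : V × W => ‖y.2‖^2)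
      (2 • ((innerSL ℝ x.2).comp (ContinuousLinearMap.snd ℝ V W))) x :=
    (hasFDerivAt_snd (p := x) (𝕜 := ℝ)).norm_sq
  have hfun : (Kfun : V × W → ℝ) = fun y => ‖y.1‖^2 * ‖y.1‖^2 + ‖y.2‖^2 := by
    funext y; simp [Kfun]; ring
  rw [hfun]
  convert (h1.mul h1).add h2 using 1
  rotate_right
  refine ContinuousLinearMap.ext fun y => ?_
  obtain ⟨v, w⟩ := y
  simp [dKr, smul_eq_mul]
  ring
  all_goals rfl

lemma hasFDerivAt_KC (t : ℂ) (x : V × W) (hx : x ≠ 0) :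
    HasFDerivAt (fun y : V × W => (Kfun y : ℂ)^t)
      ((t * (Kfun x : ℂ)^(t-1)) • ((Complex.ofRealCLM).comp (dKr x))) x := by
  have hK : HasFDerivAt (fun y : V × W => ((Kfun y : ℝ) : ℂ))
      ((Complex.ofRealCLM).comp (dKr x)) x :=
    (Complex.ofRealCLM.hasFDerivAt).comp x (hasFDerivAt_Kfun x)
  have hslit : ((Kfun x : ℝ) : ℂ) ∈ Complex.slitPlane :=
    Complex.ofReal_mem_slitPlane.2 (Kfun_pos x hx)
  have hd := ((Complex.hasStrictDerivAt_cpow_const (c := t) hslit).hasDerivAt)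
  have h3 := (hd.hasFDerivAt.restrictScalars ℝ).comp x hK
  convert h3 using 1
  rotate_right
  refine ContinuousLinearMap.ext fun y => ?_
  obtain ⟨v, w⟩ := y
  simp [smul_eq_mul]
  ring
  all_goals rfl

/-! ### generic vector-field helpers -/

lemma vfV_apply (br : V →ₗ[ℝ] V →ₗ[ℝ] W) (S : V) {f : V × W → ℂ} {D : V × W →L[ℝ] ℂ}
    {x : V × W} (hf : HasFDerivAt f D x) :
    vfV br S f x = D (S, 0) - (1/2 : ℂ) * D (0, br S x.1) := by
  simp only [vfV, hf.fderiv]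

lemma vfW_apply (T : W) {f : V × W → ℂ} {D : V × W →L[ℝ] ℂ}
    {x : V × W} (hf : HasFDerivAt f D x) :
    vfW T f x = D (0, T) := by
  simp only [vfW, hf.fderiv]

lemma vfV_congr (br : V →ₗ[ℝ] V →ₗ[ℝ] W) (S : V) {f g : V × W → ℂ} {x : V × W}
    (h : f =ᶠ[nhds x] g) : vfV br S f x = vfV br S g x := by
  simp only [vfV, h.fderiv_eq]

lemma vfW_congr (T : W) {f g : V × W → ℂ} {x : V × W}
    (h : f =ᶠ[nhds x] g) : vfW T f x = vfW T g x := by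
  simp only [vfW, h.fderiv_eq]

lemma vfV_eventually (br : V →ₗ[ℝ] V →ₗ[ℝ] W) (S : V) {f g : V × W → ℂ} {x : V × W}
    (h : f =ᶠ[nhds x] g) : vfV br S f =ᶠ[nhds x] vfV br S g := by
  filter_upwards [h.eventuallyEq_nhds] with y hy
  exact vfV_congr br S hy

lemma subLap_congr (br : V →ₗ[ℝ] V →ₗ[ℝ] W) {ι : Type*} (fs : Finset ι) (S : ι → V)
    {f g : V × W → ℂ} {x : V × W} (h : f =ᶠ[nhds x] g) :
    subLap br fs S f x = subLap br fs S g x := by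
  unfold subLap
  exact Finset.sum_congr rfl fun j _ => vfV_congr br (S j) (vfV_eventually br (S j) h)

lemma eventually_ne_zero {x : V × W} (hx : x ≠ 0) : ∀ᶠ y in nhds x, y ≠ (0 : V × W) :=
  (isOpen_ne (x := (0 : V × W))).mem_nhds hx

/-! ### the function L and its derivative -/

def myLf (br : V →ₗ[ℝ] V →ₗ[ℝ] W) (S : V) (y : V × W) : ℝ :=
  4*‖y.1‖^2*⟪y.1, S⟫_ℝ - ⟪y.2, br S y.1⟫_ℝ

def dLf (br : V →ₗ[ℝ] V →ₗ[ℝ] W) (S : V) (x : V × W) : V × W →L[ℝ] ℝ :=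
  ((8:ℝ) * ⟪x.1, S⟫_ℝ) • ((innerSL ℝ x.1).comp (ContinuousLinearMap.fst ℝ V W))
  + ((4:ℝ)*‖x.1‖^2) • ((innerSL ℝ S).comp (ContinuousLinearMap.fst ℝ V W))
  - (innerSL ℝ (br S x.1)).comp (ContinuousLinearMap.snd ℝ V W)
  - (innerSL ℝ x.2).comp ((LinearMap.toContinuousLinearMap (br S)).comp
      (ContinuousLinearMap.fst ℝ V W))

@[simp] lemma dLf_apply (br : V →ₗ[ℝ] V →ₗ[ℝ] W) (S : V) (x : V × W) (v : V) (w : W) :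
    dLf br S x (v, w) = 8 * ⟪x.1, S⟫_ℝ * ⟪x.1, v⟫_ℝ + 4*‖x.1‖^2 * ⟪S, v⟫_ℝ
      - ⟪br S x.1, w⟫_ℝ - ⟪x.2, br S v⟫_ℝ := by
  simp [dLf, smul_eq_mul]

lemma hasFDerivAt_Lf (br : V →ₗ[ℝ] V →ₗ[ℝ] W) (S : V) (x : V × W) :
    HasFDerivAt (myLf br S) (dLf br S x) x := by
  have hX : HasFDerivAt (fun y : V × W => y.1) (ContinuousLinearMap.fst ℝ V W) x :=
    hasFDerivAt_fst
  have hZ : HasFDerivAt (fun y : V × W => y.2) (ContinuousLinearMap.snd ℝ V W) x :=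
    hasFDerivAt_snd
  have hS : HasFDerivAt (fun _ : V × W => S) (0 : V × W →L[ℝ] V) x := hasFDerivAt_const S x
  have hn : HasFDerivAt (fun y : V × W => ‖y.1‖^2)
      (2 • ((innerSL ℝ x.1).comp (ContinuousLinearMap.fst ℝ V W))) x :=
    (hasFDerivAt_fst (p := x) (𝕜 := ℝ)).norm_sq
  have hbrX : HasFDerivAt (fun y : V × W => br S y.1)
      ((LinearMap.toContinuousLinearMap (br S)).comp (ContinuousLinearMap.fst ℝ V W)) x :=
    ((LinearMap.toContinuousLinearMap (br S)).hasFDerivAt).comp x hX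
  have h1 : HasFDerivAt (fun y : V × W => 4*‖y.1‖^2*⟪y.1, S⟫_ℝ) _ x :=
    (hn.const_mul (4:ℝ)).mul (hX.inner ℝ hS)
  have h2 : HasFDerivAt (fun y : V × W => ⟪y.2, br S y.1⟫_ℝ) _ x := hZ.inner ℝ hbrX
  have h := h1.sub h2
  convert h using 1
  rotate_right
  refine ContinuousLinearMap.ext fun y => ?_
  obtain ⟨v, w⟩ := y
  simp [dLf, smul_eq_mul, fderivInnerCLM_apply, real_inner_comm]
  ring
  all_goals rfl

end MyAux

section MyAux2
variable {V W : Type*} [NormedAddCommGroup V] [InnerProductSpace ℝ V]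
  [NormedAddCommGroup W] [InnerProductSpace ℝ W] [FiniteDimensional ℝ V] [FiniteDimensional ℝ W]

set_option linter.unusedSectionVars false
set_option maxHeartbeats 1000000

/-! ### first and second derivative values -/

lemma vfV_Ks (br : V →ₗ[ℝ] V →ₗ[ℝ] W) (S : V) (s : ℂ) {x : V × W} (hx : x ≠ 0) :
    vfV br S (Ks s) x = s * (Kfun x : ℂ)^(s-1) * (myLf br S x : ℂ) := by
  have h : HasFDerivAt (Ks s)
      ((s * (Kfun x : ℂ)^(s-1)) • ((Complex.ofRealCLM).comp (dKr x))) x :=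
    hasFDerivAt_KC s x hx
  rw [vfV_apply br S h]
  simp [myLf, smul_eq_mul]
  push_cast
  ring

lemma vfV_F1 (br : V →ₗ[ℝ] V →ₗ[ℝ] W) (hbr : ∀ X : V, br X X = 0) (S : V) (s : ℂ)
    {x : V × W} (hx : x ≠ 0) :
    vfV br S (fun y => s * (Kfun y : ℂ)^(s-1) * (myLf br S y : ℂ)) x
      = s*(s-1) * (Kfun x : ℂ)^(s-2) * (myLf br S x : ℂ)^2
        + s * (Kfun x : ℂ)^(s-1) *
          (8 * (⟪x.1, S⟫_ℝ : ℂ)^2 + 4*((‖x.1‖^2 : ℝ) : ℂ) * (⟪S, S⟫_ℝ : ℂ)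
            + (1/2) * ((‖br S x.1‖^2 : ℝ) : ℂ)) := by
  have h := ((hasFDerivAt_KC (s-1) x hx).const_mul s).mul
    ((Complex.ofRealCLM.hasFDerivAt).comp x (hasFDerivAt_Lf br S x))
  have h' : HasFDerivAt (fun y => s * (Kfun y : ℂ)^(s-1) * (myLf br S y : ℂ)) _ x := h
  rw [vfV_apply br S h']
  rw [show s - 1 - 1 = s - 2 by ring]
  simp [hbr, smul_eq_mul, real_inner_self_eq_norm_sq, myLf]
  push_cast
  ring

lemma vfV_F2 (br : V →ₗ[ℝ] V →ₗ[ℝ] W) (S : V) (t C : ℂ) {x : V × W} (hx : x ≠ 0) :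
    vfV br S (fun y => C * (((‖y.1‖^2 : ℝ) : ℂ) * (Kfun y : ℂ)^t)) x
      = C * (2*(⟪x.1, S⟫_ℝ : ℂ)*(Kfun x : ℂ)^t
          + t*((‖x.1‖^2 : ℝ) : ℂ)*(Kfun x : ℂ)^(t-1)*(myLf br S x : ℂ)) := by
  have hn : HasFDerivAt (fun y : V × W => ((‖y.1‖^2 : ℝ) : ℂ))
      ((Complex.ofRealCLM).comp (2 • ((innerSL ℝ x.1).comp (ContinuousLinearMap.fst ℝ V W)))) x :=
    (Complex.ofRealCLM.hasFDerivAt).comp x ((hasFDerivAt_fst (p := x) (𝕜 := ℝ)).norm_sq)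
  have h := (hn.mul (hasFDerivAt_KC t x hx)).const_mul C
  have h' : HasFDerivAt (fun y => C * (((‖y.1‖^2 : ℝ) : ℂ) * (Kfun y : ℂ)^t)) _ x := h
  rw [vfV_apply br S h']
  simp [myLf, smul_eq_mul]
  push_cast
  ring

lemma vfV_F2' (br : V →ₗ[ℝ] V →ₗ[ℝ] W) (hbr : ∀ X : V, br X X = 0) (S : V) (t C : ℂ)
    {x : V × W} (hx : x ≠ 0) :
    vfV br S (fun y => C * (2*(⟪y.1, S⟫_ℝ : ℂ)*(Kfun y : ℂ)^t
          + t*((‖y.1‖^2 : ℝ) : ℂ)*(Kfun y : ℂ)^(t-1)*(myLf br S y : ℂ))) x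
      = C * (2*(⟪S, S⟫_ℝ : ℂ)*(Kfun x : ℂ)^t
          + 4*t*(⟪x.1, S⟫_ℝ : ℂ)*(Kfun x : ℂ)^(t-1)*(myLf br S x : ℂ)
          + t*(t-1)*((‖x.1‖^2 : ℝ) : ℂ)*(Kfun x : ℂ)^(t-2)*(myLf br S x : ℂ)^2
          + t*((‖x.1‖^2 : ℝ) : ℂ)*(Kfun x : ℂ)^(t-1) *
            (8 * (⟪x.1, S⟫_ℝ : ℂ)^2 + 4*((‖x.1‖^2 : ℝ) : ℂ) * (⟪S, S⟫_ℝ : ℂ)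
              + (1/2) * ((‖br S x.1‖^2 : ℝ) : ℂ))) := by
  have hi : HasFDerivAt (fun y : V × W => ((⟪y.1, S⟫_ℝ : ℝ) : ℂ)) _ x :=
    (Complex.ofRealCLM.hasFDerivAt).comp x
      ((hasFDerivAt_fst (p := x) (𝕜 := ℝ)).inner ℝ (hasFDerivAt_const S x))
  have hn : HasFDerivAt (fun y : V × W => ((‖y.1‖^2 : ℝ) : ℂ))
      ((Complex.ofRealCLM).comp (2 • ((innerSL ℝ x.1).comp (ContinuousLinearMap.fst ℝ V W)))) x :=
    (Complex.ofRealCLM.hasFDerivAt).comp x ((hasFDerivAt_fst (p := x) (𝕜 := ℝ)).norm_sq)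
  have hL : HasFDerivAt (fun y : V × W => ((myLf br S y : ℝ) : ℂ)) _ x :=
    (Complex.ofRealCLM.hasFDerivAt).comp x (hasFDerivAt_Lf br S x)
  have h1 := (hi.const_mul (2:ℂ)).mul (hasFDerivAt_KC t x hx)
  have h2 := (((hn.const_mul t).mul (hasFDerivAt_KC (t-1) x hx)).mul hL)
  have h := (h1.add h2).const_mul C
  have h' : HasFDerivAt (fun y => C * (2*(⟪y.1, S⟫_ℝ : ℂ)*(Kfun y : ℂ)^t
      + t*((‖y.1‖^2 : ℝ) : ℂ)*(Kfun y : ℂ)^(t-1)*(myLf br S y : ℂ))) _ x := h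
  rw [vfV_apply br S h']
  rw [show t - 1 - 1 = t - 2 by ring]
  simp [hbr, smul_eq_mul, real_inner_self_eq_norm_sq, myLf, fderivInnerCLM_apply]
  push_cast
  ring

lemma vfW_Ks (T0 : W) (s : ℂ) {x : V × W} (hx : x ≠ 0) :
    vfW T0 (Ks s) x = s * (Kfun x : ℂ)^(s-1) * (2*(⟪x.2, T0⟫_ℝ : ℂ)) := by
  have h : HasFDerivAt (Ks s)
      ((s * (Kfun x : ℂ)^(s-1)) • ((Complex.ofRealCLM).comp (dKr x))) x :=
    hasFDerivAt_KC s x hx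
  rw [vfW_apply T0 h]
  simp [smul_eq_mul]

lemma vfW_F3 (T0 : W) (s : ℂ) {x : V × W} (hx : x ≠ 0) :
    vfW T0 (fun y => s * (Kfun y : ℂ)^(s-1) * (2*(⟪y.2, T0⟫_ℝ : ℂ))) x
      = s*(s-1) * (Kfun x : ℂ)^(s-2) * (4 * (⟪x.2, T0⟫_ℝ : ℂ)^2)
        + s * (Kfun x : ℂ)^(s-1) * (2*(⟪T0, T0⟫_ℝ : ℂ)) := by
  have hi : HasFDerivAt (fun y : V × W => ((⟪y.2, T0⟫_ℝ : ℝ) : ℂ)) _ x :=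
    (Complex.ofRealCLM.hasFDerivAt).comp x
      ((hasFDerivAt_snd (p := x) (𝕜 := ℝ)).inner ℝ (hasFDerivAt_const T0 x))
  have h := ((hasFDerivAt_KC (s-1) x hx).const_mul s).mul (hi.const_mul (2:ℂ))
  have h' : HasFDerivAt (fun y => s * (Kfun y : ℂ)^(s-1) * (2*(⟪y.2, T0⟫_ℝ : ℂ))) _ x := h
  rw [vfW_apply T0 h']
  rw [show s - 1 - 1 = s - 2 by ring]
  simp [smul_eq_mul, fderivInnerCLM_apply]
  push_cast
  ring

end MyAux2

section MyAux3
variable {V W : Type*} [NormedAddCommGroup V] [InnerProductSpace ℝ V]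
  [NormedAddCommGroup W] [InnerProductSpace ℝ W] [FiniteDimensional ℝ V] [FiniteDimensional ℝ W]

set_option linter.unusedSectionVars false
set_option maxHeartbeats 1000000

lemma br_antisymm (br : V →ₗ[ℝ] V →ₗ[ℝ] W) (hbr : ∀ X : V, br X X = 0) (a b : V) :
    br b a = - br a b := by
  have h := hbr (a + b)
  simp only [map_add, LinearMap.add_apply, hbr, zero_add, add_zero] at h
  exact eq_neg_of_add_eq_zero_left h

lemma J_skew (br : V →ₗ[ℝ] V →ₗ[ℝ] W) (hbr : ∀ X : V, br X X = 0)
    (J : W →ₗ[ℝ] V →ₗ[ℝ] V) (hJ : ∀ (z : W) (X Y : V), ⟪J z X, Y⟫_ℝ = ⟪z, br X Y⟫_ℝ)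
    (z : W) (a b : V) : ⟪J z a, b⟫_ℝ = -⟪J z b, a⟫_ℝ := by
  rw [hJ, hJ, br_antisymm br hbr a b, inner_neg_right, neg_neg]

lemma J_norm (br : V →ₗ[ℝ] V →ₗ[ℝ] W) (hbr : ∀ X : V, br X X = 0)
    (J : W →ₗ[ℝ] V →ₗ[ℝ] V) (hJ : ∀ (z : W) (X Y : V), ⟪J z X, Y⟫_ℝ = ⟪z, br X Y⟫_ℝ)
    (hH : ∀ (z : W) (X : V), J z (J z X) = (-16 * ‖z‖^2) • X)
    (z : W) (X : V) : ⟪J z X, J z X⟫_ℝ = 16*‖z‖^2*‖X‖^2 := by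
  rw [J_skew br hbr J hJ z X (J z X), hH, real_inner_smul_left, real_inner_self_eq_norm_sq]
  ring

lemma myLf_eq (br : V →ₗ[ℝ] V →ₗ[ℝ] W) (hbr : ∀ X : V, br X X = 0)
    (J : W →ₗ[ℝ] V →ₗ[ℝ] V) (hJ : ∀ (z : W) (X Y : V), ⟪J z X, Y⟫_ℝ = ⟪z, br X Y⟫_ℝ)
    (S : V) (y : V × W) :
    myLf br S y = ⟪(4*‖y.1‖^2) • y.1 + J y.2 y.1, S⟫_ℝ := by
  rw [inner_add_left, real_inner_smul_left, J_skew br hbr J hJ, hJ]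
  simp [myLf, real_inner_comm]
  ring

lemma sum_inner_sq {ι : Type*} [Fintype ι] {E : Type*} [NormedAddCommGroup E]
    [InnerProductSpace ℝ E] (B : OrthonormalBasis ι ℝ E) (v : E) :
    ∑ j, ⟪v, B j⟫_ℝ^2 = ‖v‖^2 := by
  have h := B.sum_inner_mul_inner v v
  rw [real_inner_self_eq_norm_sq] at h
  rw [← h]
  exact Finset.sum_congr rfl fun j _ => by rw [sq, real_inner_comm (B j) v]

lemma sum_inner_mul {ι : Type*} [Fintype ι] {E : Type*} [NormedAddCommGroup E]
    [InnerProductSpace ℝ E] (B : OrthonormalBasis ι ℝ E) (v w : E) :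
    ∑ j, ⟪v, B j⟫_ℝ * ⟪w, B j⟫_ℝ = ⟪v, w⟫_ℝ := by
  have h := B.sum_inner_mul_inner v w
  rw [← h]
  exact Finset.sum_congr rfl fun j _ => by rw [real_inner_comm (B j) w]

variable {p q : ℕ}

lemma sum_Lf_sq (br : V →ₗ[ℝ] V →ₗ[ℝ] W) (hbr : ∀ X : V, br X X = 0)
    (J : W →ₗ[ℝ] V →ₗ[ℝ] V) (hJ : ∀ (z : W) (X Y : V), ⟪J z X, Y⟫_ℝ = ⟪z, br X Y⟫_ℝ)
    (hH : ∀ (z : W) (X : V), J z (J z X) = (-16 * ‖z‖^2) • X)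
    (S : OrthonormalBasis (Fin p) ℝ V) (y : V × W) :
    ∑ j, (myLf br (S j) y)^2 = 16*‖y.1‖^2*Kfun y := by
  have hXJ : ⟪y.1, J y.2 y.1⟫_ℝ = 0 := by
    rw [real_inner_comm, hJ, hbr, inner_zero_right]
  have hJJ := J_norm br hbr J hJ hH y.2 y.1
  have e1 : ∀ j, (myLf br (S j) y)^2 = ⟪(4*‖y.1‖^2) • y.1 + J y.2 y.1, S j⟫_ℝ^2 :=
    fun j => by rw [myLf_eq br hbr J hJ]
  rw [Finset.sum_congr rfl fun j _ => e1 j, sum_inner_sq S, ← real_inner_self_eq_norm_sq,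
    real_inner_add_add_self, real_inner_smul_left, real_inner_smul_right,
    real_inner_smul_left, hXJ, hJJ, real_inner_self_eq_norm_sq]
  unfold Kfun
  ring

lemma sum_X_Lf (br : V →ₗ[ℝ] V →ₗ[ℝ] W) (hbr : ∀ X : V, br X X = 0)
    (J : W →ₗ[ℝ] V →ₗ[ℝ] V) (hJ : ∀ (z : W) (X Y : V), ⟪J z X, Y⟫_ℝ = ⟪z, br X Y⟫_ℝ)
    (S : OrthonormalBasis (Fin p) ℝ V) (y : V × W) :
    ∑ j, ⟪y.1, S j⟫_ℝ * myLf br (S j) y = 4*‖y.1‖^2*‖y.1‖^2 := by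
  have hXJ : ⟪y.1, J y.2 y.1⟫_ℝ = 0 := by
    rw [real_inner_comm, hJ, hbr, inner_zero_right]
  have e1 : ∀ j, ⟪y.1, S j⟫_ℝ * myLf br (S j) y
      = ⟪y.1, S j⟫_ℝ * ⟪(4*‖y.1‖^2) • y.1 + J y.2 y.1, S j⟫_ℝ :=
    fun j => by rw [myLf_eq br hbr J hJ]
  rw [Finset.sum_congr rfl fun j _ => e1 j, sum_inner_mul S, inner_add_right,
    real_inner_smul_right, hXJ, real_inner_self_eq_norm_sq]
  ring

lemma sum_br_norm (br : V →ₗ[ℝ] V →ₗ[ℝ] W) (hbr : ∀ X : V, br X X = 0)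
    (J : W →ₗ[ℝ] V →ₗ[ℝ] V) (hJ : ∀ (z : W) (X Y : V), ⟪J z X, Y⟫_ℝ = ⟪z, br X Y⟫_ℝ)
    (hH : ∀ (z : W) (X : V), J z (J z X) = (-16 * ‖z‖^2) • X)
    (S : OrthonormalBasis (Fin p) ℝ V) (T : OrthonormalBasis (Fin q) ℝ W) (y : V × W) :
    ∑ j, ‖br (S j) y.1‖^2 = 16*(q:ℝ)*‖y.1‖^2 := by
  have e1 : ∀ j : Fin p, ‖br (S j) y.1‖^2 = ∑ k, ⟪J (T k) y.1, S j⟫_ℝ^2 := by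
    intro j
    rw [← sum_inner_sq T (br (S j) y.1)]
    refine Finset.sum_congr rfl fun k _ => ?_
    rw [real_inner_comm (T k) (br (S j) y.1), ← hJ, J_skew br hbr J hJ, neg_sq]
  rw [Finset.sum_congr rfl fun j _ => e1 j, Finset.sum_comm]
  have e2 : ∀ k : Fin q, ∑ j, ⟪J (T k) y.1, S j⟫_ℝ^2 = 16*‖y.1‖^2 := by
    intro k
    have h1 : ∀ j, ⟪J (T k) y.1, S j⟫_ℝ^2 = ⟪J (T k) y.1, S j⟫_ℝ^2 := fun _ => rfl
    rw [show (∑ j, ⟪J (T k) y.1, S j⟫_ℝ^2) = ‖J (T k) y.1‖^2 from by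
      rw [← sum_inner_sq S (J (T k) y.1)]]
    rw [← real_inner_self_eq_norm_sq, J_norm br hbr J hJ hH, T.orthonormal.1 k]
    ring
  rw [Finset.sum_congr rfl fun k _ => e2 k, Finset.sum_const, Finset.card_univ,
    Fintype.card_fin, nsmul_eq_mul]
  ring

lemma sum_SS (S : OrthonormalBasis (Fin p) ℝ V) : ∑ j, ⟪S j, S j⟫_ℝ = (p:ℝ) := by
  have h : ∀ j, ⟪S j, S j⟫_ℝ = 1 := by
    intro j
    rw [real_inner_self_eq_norm_sq, S.orthonormal.1 j]
    norm_num
  rw [Finset.sum_congr rfl fun j _ => h j, Finset.sum_const, Finset.card_univ,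
    Fintype.card_fin, nsmul_eq_mul, mul_one]

lemma sum_second (br : V →ₗ[ℝ] V →ₗ[ℝ] W) (hbr : ∀ X : V, br X X = 0)
    (J : W →ₗ[ℝ] V →ₗ[ℝ] V) (hJ : ∀ (z : W) (X Y : V), ⟪J z X, Y⟫_ℝ = ⟪z, br X Y⟫_ℝ)
    (hH : ∀ (z : W) (X : V), J z (J z X) = (-16 * ‖z‖^2) • X)
    (S : OrthonormalBasis (Fin p) ℝ V) (T : OrthonormalBasis (Fin q) ℝ W) (y : V × W) :
    ∑ j, (8*⟪y.1, S j⟫_ℝ^2 + 4*‖y.1‖^2*⟪S j, S j⟫_ℝ + (1/2)*‖br (S j) y.1‖^2)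
      = (8 + 4*(p:ℝ) + 8*(q:ℝ))*‖y.1‖^2 := by
  rw [Finset.sum_add_distrib, Finset.sum_add_distrib, ← Finset.mul_sum, ← Finset.mul_sum,
    ← Finset.mul_sum, sum_inner_sq S, sum_SS S, sum_br_norm br hbr J hJ hH S T]
  ring

end MyAux3

section MyAux4
variable {V W : Type*} [NormedAddCommGroup V] [InnerProductSpace ℝ V]
  [NormedAddCommGroup W] [InnerProductSpace ℝ W] [FiniteDimensional ℝ V] [FiniteDimensional ℝ W]
  {p q : ℕ}

set_option linter.unusedSectionVars false
set_option maxHeartbeats 1000000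

lemma sum_TT (T : OrthonormalBasis (Fin q) ℝ W) : ∑ k, ⟪T k, T k⟫_ℝ = (q:ℝ) := by
  have h : ∀ k, ⟪T k, T k⟫_ℝ = 1 := by
    intro k
    rw [real_inner_self_eq_norm_sq, T.orthonormal.1 k]
    norm_num
  rw [Finset.sum_congr rfl fun k _ => h k, Finset.sum_const, Finset.card_univ,
    Fintype.card_fin, nsmul_eq_mul, mul_one]

lemma subLap_Ks (br : V →ₗ[ℝ] V →ₗ[ℝ] W) (hbr : ∀ X : V, br X X = 0)
    (J : W →ₗ[ℝ] V →ₗ[ℝ] V) (hJ : ∀ (z : W) (X Y : V), ⟪J z X, Y⟫_ℝ = ⟪z, br X Y⟫_ℝ)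
    (hH : ∀ (z : W) (X : V), J z (J z X) = (-16 * ‖z‖^2) • X)
    (S : OrthonormalBasis (Fin p) ℝ V) (T : OrthonormalBasis (Fin q) ℝ W)
    (s : ℂ) {x : V × W} (hx : x ≠ 0) :
    subLap br Finset.univ (fun j => S j) (Ks s) x
      = (16*s^2 + (4*(p:ℂ) + 8*(q:ℂ) - 8)*s) * (((‖x.1‖^2 : ℝ) : ℂ) * (Kfun x : ℂ)^(s-1)) := by
  have hstep : ∀ j : Fin p, vfV br (S j) (vfV br (S j) (Ks s)) x
      = (s*(s-1) * (Kfun x : ℂ)^(s-2)) * ((myLf br (S j) x ^ 2 : ℝ) : ℂ)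
        + (s * (Kfun x : ℂ)^(s-1)) *
          ((8*⟪x.1, S j⟫_ℝ^2 + 4*‖x.1‖^2*⟪S j, S j⟫_ℝ + (1/2)*‖br (S j) x.1‖^2 : ℝ) : ℂ) := by
    intro j
    rw [vfV_congr br (S j) (Filter.eventuallyEq_of_mem (eventually_ne_zero hx)
      (fun y hy => vfV_Ks br (S j) s hy)), vfV_F1 br hbr (S j) s hx]
    push_cast
    ring
  rw [show subLap br Finset.univ (fun j => S j) (Ks s) x
      = ∑ j, vfV br (S j) (vfV br (S j) (Ks s)) x from rfl,
    Finset.sum_congr rfl fun j _ => hstep j, Finset.sum_add_distrib,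
    ← Finset.mul_sum, ← Finset.mul_sum,
    ← Complex.ofReal_sum, ← Complex.ofReal_sum, sum_Lf_sq br hbr J hJ hH S x,
    sum_second br hbr J hJ hH S T x]
  have hKne : ((Kfun x : ℝ) : ℂ) ≠ 0 := Complex.ofReal_ne_zero.2 (ne_of_gt (Kfun_pos x hx))
  have hpow : (Kfun x : ℂ)^(s-2) * (Kfun x : ℂ) = (Kfun x : ℂ)^(s-1) := by
    rw [show s-1 = (s-2)+1 by ring, Complex.cpow_add _ _ hKne, Complex.cpow_one]
  push_cast
  linear_combination (16*s*(s-1)*((‖x.1‖:ℂ))^2) * hpow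

lemma subLap_nK (br : V →ₗ[ℝ] V →ₗ[ℝ] W) (hbr : ∀ X : V, br X X = 0)
    (J : W →ₗ[ℝ] V →ₗ[ℝ] V) (hJ : ∀ (z : W) (X Y : V), ⟪J z X, Y⟫_ℝ = ⟪z, br X Y⟫_ℝ)
    (hH : ∀ (z : W) (X : V), J z (J z X) = (-16 * ‖z‖^2) • X)
    (S : OrthonormalBasis (Fin p) ℝ V) (T : OrthonormalBasis (Fin q) ℝ W)
    (t C : ℂ) {x : V × W} (hx : x ≠ 0) :
    subLap br Finset.univ (fun j => S j)
        (fun y => C * (((‖y.1‖^2 : ℝ) : ℂ) * (Kfun y : ℂ)^t)) x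
      = C * (2*(p:ℂ)*(Kfun x : ℂ)^t
          + (16*t^2 + t*(4*(p:ℂ)+8*(q:ℂ)+8)) * ((‖x.1‖^2 : ℝ) : ℂ)^2 * (Kfun x : ℂ)^(t-1)) := by
  have hstep : ∀ j : Fin p,
      vfV br (S j) (vfV br (S j) (fun y => C * (((‖y.1‖^2 : ℝ) : ℂ) * (Kfun y : ℂ)^t))) x
      = (C*2*(Kfun x : ℂ)^t) * ((⟪S j, S j⟫_ℝ : ℝ) : ℂ)
        + (C*4*t*(Kfun x : ℂ)^(t-1)) * ((⟪x.1, S j⟫_ℝ * myLf br (S j) x : ℝ) : ℂ)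
        + (C*t*(t-1)*((‖x.1‖^2:ℝ):ℂ)*(Kfun x : ℂ)^(t-2)) * ((myLf br (S j) x ^2 : ℝ) : ℂ)
        + (C*t*((‖x.1‖^2:ℝ):ℂ)*(Kfun x : ℂ)^(t-1)) *
            ((8*⟪x.1, S j⟫_ℝ^2 + 4*‖x.1‖^2*⟪S j, S j⟫_ℝ + (1/2)*‖br (S j) x.1‖^2 : ℝ) : ℂ) := by
    intro j
    rw [vfV_congr br (S j) (Filter.eventuallyEq_of_mem (eventually_ne_zero hx)
      (fun y hy => vfV_F2 br (S j) t C hy)), vfV_F2' br hbr (S j) t C hx]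
    push_cast
    ring
  rw [show subLap br Finset.univ (fun j => S j)
        (fun y => C * (((‖y.1‖^2 : ℝ) : ℂ) * (Kfun y : ℂ)^t)) x
      = ∑ j, vfV br (S j) (vfV br (S j)
          (fun y => C * (((‖y.1‖^2 : ℝ) : ℂ) * (Kfun y : ℂ)^t))) x from rfl,
    Finset.sum_congr rfl fun j _ => hstep j, Finset.sum_add_distrib, Finset.sum_add_distrib,
    Finset.sum_add_distrib,
    ← Finset.mul_sum, ← Finset.mul_sum, ← Finset.mul_sum, ← Finset.mul_sum,
    ← Complex.ofReal_sum, ← Complex.ofReal_sum, ← Complex.ofReal_sum, ← Complex.ofReal_sum,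
    sum_SS S, sum_X_Lf br hbr J hJ S x, sum_Lf_sq br hbr J hJ hH S x,
    sum_second br hbr J hJ hH S T x]
  have hKne : ((Kfun x : ℝ) : ℂ) ≠ 0 := Complex.ofReal_ne_zero.2 (ne_of_gt (Kfun_pos x hx))
  have hpow : (Kfun x : ℂ)^(t-2) * (Kfun x : ℂ) = (Kfun x : ℂ)^(t-1) := by
    rw [show t-1 = (t-2)+1 by ring, Complex.cpow_add _ _ hKne, Complex.cpow_one]
  push_cast
  linear_combination (C*16*t*(t-1)*((‖x.1‖:ℂ))^2*((‖x.1‖:ℂ))^2) * hpow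

lemma boxLap_Ks (T : OrthonormalBasis (Fin q) ℝ W) (s : ℂ) {x : V × W} (hx : x ≠ 0) :
    boxLap Finset.univ (fun k => T k) (Ks s) x
      = 4*s*(s-1)*((‖x.2‖^2 : ℝ):ℂ)*(Kfun x : ℂ)^(s-2) + 2*s*(q:ℂ)*(Kfun x : ℂ)^(s-1) := by
  have hstep : ∀ k : Fin q, vfW (T k) (vfW (T k) (Ks s)) x
      = (4*s*(s-1)*(Kfun x : ℂ)^(s-2)) * ((⟪x.2, T k⟫_ℝ^2 : ℝ):ℂ)
        + (2*s*(Kfun x : ℂ)^(s-1)) * ((⟪T k, T k⟫_ℝ : ℝ):ℂ) := by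
    intro k
    rw [vfW_congr (T k) (Filter.eventuallyEq_of_mem (eventually_ne_zero hx)
      (fun y hy => vfW_Ks (T k) s hy)), vfW_F3 (T k) s hx]
    push_cast
    ring
  rw [show boxLap Finset.univ (fun k => T k) (Ks s) x
      = ∑ k, vfW (T k) (vfW (T k) (Ks s)) x from rfl,
    Finset.sum_congr rfl fun k _ => hstep k, Finset.sum_add_distrib,
    ← Finset.mul_sum, ← Finset.mul_sum,
    ← Complex.ofReal_sum, ← Complex.ofReal_sum, sum_inner_sq T x.2, sum_TT T]
  push_cast
  ring

end MyAux4

/-- `(Δ² + 4(4s+2ρ-2)² □) K_s = 2B(s)(2s+q-1)(4s+2ρ-4) K_{s-1}`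
on `(𝔳 × 𝔷) ∖ {(0,0)}`. -/
theorem deltaSqPlusBoxKs {V W : Type*} [NormedAddCommGroup V] [InnerProductSpace ℝ V]
    [NormedAddCommGroup W] [InnerProductSpace ℝ W]
    [FiniteDimensional ℝ V] [FiniteDimensional ℝ W]
    (p q : ℕ) (hp : Module.finrank ℝ V = p) (hq : Module.finrank ℝ W = q)
    (br : V →ₗ[ℝ] V →ₗ[ℝ] W) (hbr : ∀ X : V, br X X = 0)
    (J : W →ₗ[ℝ] V →ₗ[ℝ] V)
    (hJ : ∀ (z : W) (X Y : V), ⟪J z X, Y⟫_ℝ = ⟪z, br X Y⟫_ℝ)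
    (hH : ∀ (z : W) (X : V), J z (J z X) = (-16 * ‖z‖^2) • X)
    (S : OrthonormalBasis (Fin p) ℝ V)
    (T : OrthonormalBasis (Fin q) ℝ W)
    (s : ℂ) :
    ∀ x : V × W, x ≠ 0 →
      subLap br Finset.univ (fun j => S j) (subLap br Finset.univ (fun j => S j) (Ks s)) x
          + 4*(4*s + 2*(rhoC p q) - 2)^2 * boxLap Finset.univ (fun j => T j) (Ks s) x
        = 2 * Bc p q s * (2*s + (q : ℂ) - 1) * (4*s + 2*(rhoC p q) - 4) * Ks (s-1) x := by
  intro x hx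
  have hKne : ((Kfun x : ℝ) : ℂ) ≠ 0 := Complex.ofReal_ne_zero.2 (ne_of_gt (Kfun_pos x hx))
  have hpow : (Kfun x : ℂ)^(s-2) * (Kfun x : ℂ) = (Kfun x : ℂ)^(s-1) := by
    rw [show s-1 = (s-2)+1 by ring, Complex.cpow_add _ _ hKne, Complex.cpow_one]
  have h1 : subLap br Finset.univ (fun j => S j) (subLap br Finset.univ (fun j => S j) (Ks s)) x
      = subLap br Finset.univ (fun j => S j)
          (fun y => (16*s^2 + (4*(p:ℂ) + 8*(q:ℂ) - 8)*s) *
            (((‖y.1‖^2 : ℝ) : ℂ) * (Kfun y : ℂ)^(s-1))) x :=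
    subLap_congr br _ _ (Filter.eventuallyEq_of_mem (eventually_ne_zero hx)
      (fun y hy => subLap_Ks br hbr J hJ hH S T s hy))
  rw [h1, subLap_nK br hbr J hJ hH S T (s-1) _ hx, boxLap_Ks T s hx,
    show s-1-1 = s-2 by ring]
  have hz : ((‖x.2‖^2 : ℝ) : ℂ) = ((Kfun x : ℝ) : ℂ) - ((‖x.1‖^2 : ℝ) : ℂ)^2 := by
    have hK : Kfun x = ‖x.1‖^4 + ‖x.2‖^2 := rfl
    rw [hK]
    push_cast
    ring
  rw [hz]
  simp only [Ks, Bc, rhoC]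
  push_cast
  linear_combination (16*s*(s-1)*(4*s + (p:ℂ) + 2*(q:ℂ) - 2)^2) * hpow
end
end

section
/- Suppose α, β ∈ ℝ satisfy α > −1, β ≥ 0 and β − α > 1. Then there exists a constant C > 0 such that for every integer q ≥ 0 one has Σ_{n=0}^∞ (n+1)^α / (n+q+1)^β ≤ C / (q+1)^{β−α−1} (in particular the series converges). -/
open Finset

/-- Mean-value type inequality for the tail: for `r > 0` and `a ≥ 1`,
`r * (a+1)^(-(r+1)) ≤ a^(-r) - (a+1)^(-r)`. -/
lemma tail_step {r : ℝ} (hr : 0 < r) {a : ℝ} (ha : 1 ≤ a) :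
    r * (a + 1) ^ (-(r + 1)) ≤ a ^ (-r) - (a + 1) ^ (-r) := by
  have ha0 : 0 < a := by linarith
  have hb0 : 0 < a + 1 := by linarith
  have hlog : Real.log a - Real.log (a + 1) ≤ -(1 / (a + 1)) := by
    have h1 : Real.log (a / (a + 1)) ≤ a / (a + 1) - 1 :=
      Real.log_le_sub_one_of_pos (by positivity)
    rw [Real.log_div (ne_of_gt ha0) (ne_of_gt hb0)] at h1
    have h2 : a / (a + 1) - 1 = -(1 / (a + 1)) := by field_simp; ring
    linarith
  have hpa : 0 < a ^ r := Real.rpow_pos_of_pos ha0 r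
  have hpb : 0 < (a + 1) ^ r := Real.rpow_pos_of_pos hb0 r
  have key : (1 + r / (a + 1)) * a ^ r ≤ (a + 1) ^ r := by
    have e1 : a ^ r = Real.exp (Real.log a * r) := Real.rpow_def_of_pos ha0 r
    have e2 : (a + 1) ^ r = Real.exp (Real.log (a + 1) * r) := Real.rpow_def_of_pos hb0 r
    have h3 : 1 + r / (a + 1) ≤ Real.exp (r / (a + 1)) := by
      have := Real.add_one_le_exp (r / (a + 1)); linarith
    calc (1 + r / (a + 1)) * a ^ r
        ≤ Real.exp (r / (a + 1)) * Real.exp (Real.log a * r) := by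
          rw [e1]
          exact mul_le_mul_of_nonneg_right h3 (Real.exp_pos _).le
      _ = Real.exp (r / (a + 1) + Real.log a * r) := (Real.exp_add _ _).symm
      _ ≤ Real.exp (Real.log (a + 1) * r) := by
          apply Real.exp_le_exp.mpr
          have h4 := mul_le_mul_of_nonneg_left hlog hr.le
          have h5 : r / (a + 1) = r * (1 / (a + 1)) := by ring
          nlinarith
      _ = (a + 1) ^ r := e2.symm
  have key3 : (r + (a + 1)) * a ^ r ≤ (a + 1) * (a + 1) ^ r := by
    have h6 := mul_le_mul_of_nonneg_right key hb0.le
    have h7 : (1 + r / (a + 1)) * (a + 1) = r + (a + 1) := by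
      rw [add_mul, one_mul, div_mul_cancel₀ _ (ne_of_gt hb0)]; ring
    have h8 : (r + (a + 1)) * a ^ r = (1 + r / (a + 1)) * a ^ r * (a + 1) := by
      rw [← h7]; ring
    rw [h8]
    calc (1 + r / (a + 1)) * a ^ r * (a + 1) ≤ (a + 1) ^ r * (a + 1) := h6
      _ = (a + 1) * (a + 1) ^ r := by ring
  have hsum : (r + (a + 1)) / ((a + 1) * (a + 1) ^ r) ≤ 1 / a ^ r := by
    rw [div_le_div_iff₀ (by positivity) hpa]
    nlinarith
  have hb1 : (a + 1) ^ (r + 1) = (a + 1) ^ r * (a + 1) := by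
    rw [Real.rpow_add hb0, Real.rpow_one]
  rw [Real.rpow_neg ha0.le, Real.rpow_neg hb0.le, Real.rpow_neg hb0.le, hb1]
  have heq : r * ((a + 1) ^ r * (a + 1))⁻¹ + ((a + 1) ^ r)⁻¹
      = (r + (a + 1)) / ((a + 1) * (a + 1) ^ r) := by
    field_simp
  have : r * ((a + 1) ^ r * (a + 1))⁻¹ + ((a + 1) ^ r)⁻¹ ≤ (a ^ r)⁻¹ := by
    rw [heq, inv_eq_one_div]; exact hsum
  linarith

/-- Mean-value type inequality for the head: for `0 < p ≤ 1` and `n : ℕ`,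
`p * (n+1)^(p-1) ≤ (n+1)^p - n^p`. -/
lemma head_step {p : ℝ} (hp0 : 0 < p) (hp1 : p ≤ 1) (n : ℕ) :
    p * ((n : ℝ) + 1) ^ (p - 1) ≤ ((n : ℝ) + 1) ^ p - (n : ℝ) ^ p := by
  set b : ℝ := (n : ℝ) + 1 with hbdef
  have hb : 1 ≤ b := by
    rw [hbdef]; exact le_add_of_nonneg_left (Nat.cast_nonneg n)
  have hb0 : 0 < b := by linarith
  have hx : (n : ℝ) = b * (1 - 1 / b) := by
    field_simp
    rw [hbdef]; ring
  have hs1 : -1 ≤ -(1 / b) := by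
    have : 1 / b ≤ 1 := by
      rw [div_le_one hb0]; exact hb
    linarith
  have h1 : (1 - 1 / b) ^ p ≤ 1 - p * (1 / b) := by
    have h := rpow_one_add_le_one_add_mul_self hs1 hp0.le hp1
    have e : 1 + -(1 / b) = 1 - 1 / b := by ring
    rw [e] at h
    linarith [h]
  have hnn : (0:ℝ) ≤ 1 - 1 / b := by
    have : 1 / b ≤ 1 := by rw [div_le_one hb0]; exact hb
    linarith
  have h2 : (n : ℝ) ^ p = b ^ p * (1 - 1 / b) ^ p := by
    rw [hx, Real.mul_rpow hb0.le hnn]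
  have hbp : 0 < b ^ p := Real.rpow_pos_of_pos hb0 p
  have h3 : (n : ℝ) ^ p ≤ b ^ p * (1 - p * (1 / b)) := by
    rw [h2]; exact mul_le_mul_of_nonneg_left h1 hbp.le
  have h4 : b ^ (p - 1) = b ^ p / b := by
    rw [Real.rpow_sub hb0, Real.rpow_one]
  have h5 : b ^ p * (1 - p * (1 / b)) = b ^ p - p * (b ^ p / b) := by
    field_simp
  rw [h4]
  linarith [h3, h5.symm ▸ h3]

/-- Head sum estimate: `∑_{n<m} (n+1)^α ≤ max 1 (1/(α+1)) * m^(α+1)` for `α > -1`. -/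
lemma head_sum {α : ℝ} (hα : -1 < α) (m : ℕ) :
    ∑ n ∈ range m, ((n : ℝ) + 1) ^ α ≤ max 1 (1 / (α + 1)) * (m : ℝ) ^ (α + 1) := by
  have hp0 : 0 < α + 1 := by linarith
  rcases le_or_gt α 0 with hα0 | hα0
  · -- use telescoping
    have hstep : ∀ n ∈ range m, ((n : ℝ) + 1) ^ α
        ≤ (1 / (α + 1)) * (((n : ℝ) + 1) ^ (α + 1) - (n : ℝ) ^ (α + 1)) := by
      intro n _
      have h := head_step (p := α + 1) hp0 (by linarith) n
      have e : α + 1 - 1 = α := by ring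
      rw [e] at h
      calc ((n : ℝ) + 1) ^ α
          = (1 / (α + 1)) * ((α + 1) * ((n : ℝ) + 1) ^ α) := by field_simp
        _ ≤ (1 / (α + 1)) * (((n : ℝ) + 1) ^ (α + 1) - (n : ℝ) ^ (α + 1)) :=
            mul_le_mul_of_nonneg_left h (by positivity)
    calc ∑ n ∈ range m, ((n : ℝ) + 1) ^ α
        ≤ ∑ n ∈ range m, (1 / (α + 1)) * (((n : ℝ) + 1) ^ (α + 1) - (n : ℝ) ^ (α + 1)) :=
          Finset.sum_le_sum hstep
      _ = (1 / (α + 1)) * ∑ n ∈ range m, ((((n : ℕ) + 1 : ℕ) : ℝ) ^ (α + 1)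
            - (((n : ℕ) : ℕ) : ℝ) ^ (α + 1)) := by
          rw [← Finset.mul_sum]; congr 1; apply Finset.sum_congr rfl; intro n _
          push_cast; ring_nf
      _ = (1 / (α + 1)) * (((m : ℕ) : ℝ) ^ (α + 1) - ((0 : ℕ) : ℝ) ^ (α + 1)) := by
          rw [Finset.sum_range_sub (fun n : ℕ => ((n : ℕ) : ℝ) ^ (α + 1))]
      _ = (1 / (α + 1)) * (m : ℝ) ^ (α + 1) := by
          norm_num [Real.zero_rpow (ne_of_gt hp0)]
      _ ≤ max 1 (1 / (α + 1)) * (m : ℝ) ^ (α + 1) := by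
          apply mul_le_mul_of_nonneg_right (le_max_right _ _)
          positivity
  · -- α > 0 : each term ≤ m^α
    rcases Nat.eq_zero_or_pos m with rfl | hm
    · simp
      positivity
    have hm1 : (1:ℝ) ≤ (m:ℝ) := by exact_mod_cast hm
    calc ∑ n ∈ range m, ((n : ℝ) + 1) ^ α
        ≤ ∑ _n ∈ range m, (m : ℝ) ^ α := by
          apply Finset.sum_le_sum; intro n hn
          apply Real.rpow_le_rpow (by positivity) _ hα0.le
          have : n + 1 ≤ m := Finset.mem_range.mp hn
          exact_mod_cast this
      _ = (m : ℝ) * (m : ℝ) ^ α := by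
          rw [Finset.sum_const, card_range]; push_cast; ring
      _ = (m : ℝ) ^ (α + 1) := by
          rw [Real.rpow_add (by linarith : (0:ℝ) < m), Real.rpow_one]; ring
      _ ≤ max 1 (1 / (α + 1)) * (m : ℝ) ^ (α + 1) := by
          apply le_mul_of_one_le_left (by positivity) (le_max_left _ _)

/-- Tail sum estimate: `∑_{m ≤ n < N} (n+1)^(-s) ≤ (1/(s-1)) * m^(1-s)` for `s > 1`, `m ≥ 1`. -/
lemma tail_sum {s : ℝ} (hs : 1 < s) {m : ℕ} (hm : 1 ≤ m) (N : ℕ) :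
    ∑ n ∈ Finset.Ico m N, ((n : ℝ) + 1) ^ (-s) ≤ (1 / (s - 1)) * (m : ℝ) ^ (1 - s) := by
  have hr : 0 < s - 1 := by linarith
  rcases le_or_gt N m with hNm | hmN
  · have : Finset.Ico m N = ∅ := Finset.Ico_eq_empty (by omega)
    rw [this, Finset.sum_empty]
    positivity
  have hstep : ∀ n ∈ Finset.Ico m N, ((n : ℝ) + 1) ^ (-s)
      ≤ (1 / (s - 1)) * ((n : ℝ) ^ (-(s - 1)) - ((n : ℝ) + 1) ^ (-(s - 1))) := by
    intro n hn
    have hn1 : 1 ≤ n := le_trans hm (Finset.mem_Ico.mp hn).1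
    have hn1' : (1:ℝ) ≤ (n:ℝ) := by exact_mod_cast hn1
    have h := tail_step hr hn1'
    have e : -(s - 1 + 1) = -s := by ring
    rw [e] at h
    calc ((n : ℝ) + 1) ^ (-s)
        = (1 / (s - 1)) * ((s - 1) * ((n : ℝ) + 1) ^ (-s)) := by field_simp
      _ ≤ (1 / (s - 1)) * ((n : ℝ) ^ (-(s - 1)) - ((n : ℝ) + 1) ^ (-(s - 1))) :=
          mul_le_mul_of_nonneg_left h (by positivity)
  calc ∑ n ∈ Finset.Ico m N, ((n : ℝ) + 1) ^ (-s)
      ≤ ∑ n ∈ Finset.Ico m N, (1 / (s - 1)) * ((n : ℝ) ^ (-(s - 1)) - ((n : ℝ) + 1) ^ (-(s - 1))) :=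
        Finset.sum_le_sum hstep
    _ = (1 / (s - 1)) * ∑ n ∈ Finset.Ico m N, ((n : ℝ) ^ (-(s - 1)) - ((n : ℝ) + 1) ^ (-(s - 1))) := by
        rw [← Finset.mul_sum]
    _ = (1 / (s - 1)) * ((m : ℝ) ^ (-(s - 1)) - (N : ℝ) ^ (-(s - 1))) := by
        congr 1
        rw [Finset.sum_Ico_eq_sum_range]
        have e2 : ∀ i, ((m + i : ℕ) : ℝ) ^ (-(s - 1)) - ((m + i : ℕ) : ℝ) ^ (-(s-1)) = 0 := by
          intro i; ring
        have := Finset.sum_range_sub' (fun i : ℕ => ((m + i : ℕ) : ℝ) ^ (-(s - 1))) (N - m)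
        simp only [Nat.add_zero] at this
        have e3 : m + (N - m) = N := by omega
        rw [e3] at this
        rw [← this]
        apply Finset.sum_congr rfl
        intro i _
        push_cast
        ring_nf
    _ ≤ (1 / (s - 1)) * (m : ℝ) ^ (1 - s) := by
        have h1 : (0:ℝ) ≤ (N : ℝ) ^ (-(s - 1)) := by positivity
        have e4 : -(s - 1) = 1 - s := by ring
        rw [← e4]
        apply mul_le_mul_of_nonneg_left _ (by positivity)
        linarith

/-- if `α > -1`, `β ≥ 0` and `β - α > 1` then there is a constant `C > 0`
such that `∑_{n=0}^∞ (n+1)^α / (n+q+1)^β ≤ C / (q+1)^{β-α-1}` for every integer `q ≥ 0`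
(in particular the series converges). -/
theorem standardEstimate (α β : ℝ) (hα : -1 < α) (hβ : 0 ≤ β) (hβα : 1 < β - α) :
    ∃ C : ℝ, 0 < C ∧ ∀ q : ℕ,
      Summable (fun n : ℕ => ((n : ℝ) + 1)^α / ((n : ℝ) + q + 1)^β) ∧
      ∑' n : ℕ, ((n : ℝ) + 1)^α / ((n : ℝ) + q + 1)^β ≤ C / ((q : ℝ) + 1)^(β - α - 1) := by
  set C1 : ℝ := max 1 (1 / (α + 1)) with hC1def
  have hC1 : 0 < C1 := lt_of_lt_of_le one_pos (le_max_left _ _)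
  refine ⟨C1 + 1 / (β - α - 1), by
    have h0 : (0:ℝ) < β - α - 1 := by linarith
    exact add_pos hC1 (by positivity), fun q => ?_⟩
  set f : ℕ → ℝ := fun n => ((n : ℝ) + 1) ^ α / ((n : ℝ) + q + 1) ^ β with hfdef
  have hf0 : ∀ n, 0 ≤ f n := fun n => by positivity
  have hq1 : (0:ℝ) < (q:ℝ) + 1 := by positivity
  -- pointwise bounds
  have hbound1 : ∀ n : ℕ, f n ≤ ((n : ℝ) + 1) ^ α / ((q : ℝ) + 1) ^ β := by
    intro n
    apply div_le_div_of_nonneg_left (by positivity) (by positivity)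
    apply Real.rpow_le_rpow hq1.le (by push_cast; linarith) hβ
  have hbound2 : ∀ n : ℕ, f n ≤ ((n : ℝ) + 1) ^ (-(β - α)) := by
    intro n
    have e : ((n : ℝ) + 1) ^ (-(β - α)) = ((n : ℝ) + 1) ^ α / ((n : ℝ) + 1) ^ β := by
      rw [← Real.rpow_sub (by positivity)]; congr 1; ring
    rw [e]
    apply div_le_div_of_nonneg_left (by positivity) (by positivity)
    apply Real.rpow_le_rpow (by positivity) (by push_cast; linarith) hβ
  -- main partial-sum bound
  have hmain : ∀ N : ℕ, ∑ n ∈ range N, f n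
      ≤ (C1 + 1 / (β - α - 1)) * ((q : ℝ) + 1) ^ (α + 1 - β) := by
    intro N
    have hmono : ∑ n ∈ range N, f n ≤ ∑ n ∈ range (max N (q + 1)), f n :=
      Finset.sum_le_sum_of_subset_of_nonneg
        (Finset.range_subset_range.mpr (le_max_left _ _)) (fun i _ _ => hf0 i)
    set M := max N (q + 1) with hMdef
    have hqM : q + 1 ≤ M := le_max_right _ _
    have hsplit : ∑ n ∈ range M, f n
        = ∑ n ∈ range (q + 1), f n + ∑ n ∈ Finset.Ico (q + 1) M, f n := by
      rw [Finset.range_eq_Ico, Finset.range_eq_Ico]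
      exact (Finset.sum_Ico_consecutive f (Nat.zero_le _) hqM).symm
    -- head bound
    have hhead : ∑ n ∈ range (q + 1), f n ≤ C1 * ((q : ℝ) + 1) ^ (α + 1 - β) := by
      calc ∑ n ∈ range (q + 1), f n
          ≤ ∑ n ∈ range (q + 1), ((n : ℝ) + 1) ^ α / ((q : ℝ) + 1) ^ β :=
            Finset.sum_le_sum (fun n _ => hbound1 n)
        _ = (∑ n ∈ range (q + 1), ((n : ℝ) + 1) ^ α) / ((q : ℝ) + 1) ^ β := by
            rw [Finset.sum_div]
        _ ≤ (C1 * ((q + 1 : ℕ) : ℝ) ^ (α + 1)) / ((q : ℝ) + 1) ^ β := by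
            apply div_le_div_of_nonneg_right _ (by positivity)
            · exact head_sum hα (q + 1)
        _ = C1 * ((q : ℝ) + 1) ^ (α + 1 - β) := by
            push_cast
            rw [Real.rpow_sub hq1]
            ring
    -- tail bound
    have htail : ∑ n ∈ Finset.Ico (q + 1) M, f n ≤ (1 / (β - α - 1)) * ((q : ℝ) + 1) ^ (α + 1 - β) := by
      calc ∑ n ∈ Finset.Ico (q + 1) M, f n
          ≤ ∑ n ∈ Finset.Ico (q + 1) M, ((n : ℝ) + 1) ^ (-(β - α)) :=
            Finset.sum_le_sum (fun n _ => hbound2 n)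
        _ ≤ (1 / (β - α - 1)) * (((q + 1 : ℕ) : ℝ)) ^ (1 - (β - α)) :=
            tail_sum hβα (Nat.le_add_left 1 q) M
        _ = (1 / (β - α - 1)) * ((q : ℝ) + 1) ^ (α + 1 - β) := by
            push_cast
            congr 1
            ring_nf
    calc ∑ n ∈ range N, f n ≤ ∑ n ∈ range M, f n := hmono
      _ = ∑ n ∈ range (q + 1), f n + ∑ n ∈ Finset.Ico (q + 1) M, f n := hsplit
      _ ≤ C1 * ((q : ℝ) + 1) ^ (α + 1 - β) + (1 / (β - α - 1)) * ((q : ℝ) + 1) ^ (α + 1 - β) :=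
          add_le_add hhead htail
      _ = (C1 + 1 / (β - α - 1)) * ((q : ℝ) + 1) ^ (α + 1 - β) := by ring
  have hCform : (C1 + 1 / (β - α - 1)) / ((q : ℝ) + 1) ^ (β - α - 1)
      = (C1 + 1 / (β - α - 1)) * ((q : ℝ) + 1) ^ (α + 1 - β) := by
    rw [div_eq_mul_inv, ← Real.rpow_neg hq1.le]
    congr 2
    ring
  constructor
  · exact summable_of_sum_range_le hf0 hmain
  · rw [hCform]
    exact Real.tsum_le_of_sum_range_le hf0 hmain
end
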